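/- arXiv:1801.03655 — 3 statements merged into one kernel-verified Lean document; each statement's English description precedes it below -/
import Mathlib

section
/- For any discrete memoryless multiple access channel, the function σ₁ is continuous on ℝ_{≥0}; in particular lim_{δ→0⁺} σ₁(δ) = σ₁(0). -/
open scoped BigOperators

noncomputable section

/-- Shannon entropy (base 2) of a (sub)probability mass function on a finite type. -/
def ent2 {α : Type} [Fintype α] (p : α → ℝ) : ℝ :=
  -∑ a, p a * Real.logb 2 (p a)

/-- Conditional mutual information `I(A;B|U)` (in bits) of the joint pmf `p` on `U × A × B`,
given in curried form, computed as `H(A|U) + H(B|U) - H(A,B|U)`. -/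
def condMI {U A B : Type} [Fintype U] [Fintype A] [Fintype B]
    (p : U → A → B → ℝ) : ℝ :=
  ent2 (fun ua : U × A => ∑ b, p ua.1 ua.2 b)
    + ent2 (fun ub : U × B => ∑ a, p ub.1 a ub.2)
    - ent2 (fun uab : U × A × B => p uab.1 uab.2.1 uab.2.2)
    - ent2 (fun u : U => ∑ a, ∑ b, p u a b)

/-- `p` is a joint pmf on `U × A × B` (curried form). -/
def IsPMF3 {U A B : Type} [Fintype U] [Fintype A] [Fintype B] (p : U → A → B → ℝ) : Prop :=
  (∀ u a b, 0 ≤ p u a b) ∧ ∑ u, ∑ a, ∑ b, p u a b = 1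

/-- A discrete memoryless multiple access channel with input alphabets `X1, X2` and
output alphabet `Y`. -/
structure MAC (X1 X2 Y : Type) [Fintype X1] [Fintype X2] [Fintype Y] where
  W : X1 → X2 → Y → ℝ
  nonneg : ∀ x1 x2 y, 0 ≤ W x1 x2 y
  sum_one : ∀ x1 x2, ∑ y, W x1 x2 y = 1

variable {X1 X2 Y : Type} [Fintype X1] [Fintype X2] [Fintype Y]

/-- The set of values `(1/n) I(X₁ⁿ,X₂ⁿ;Yⁿ|U)` over all finite auxiliary alphabets `U`
(wlog `U = Fin k`) and all joint pmfs `p(u,x₁ⁿ,x₂ⁿ)` with `I(X₁ⁿ;X₂ⁿ|U) ≤ nδ`,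
where `Yⁿ` is the output of the `n`-th extension of the MAC `M`. -/
def sigmaSet (M : MAC X1 X2 Y) (n : ℕ) (δ : ℝ) : Set ℝ :=
  {r | ∃ (k : ℕ) (p : Fin k → (Fin n → X1) → (Fin n → X2) → ℝ),
    IsPMF3 p ∧ condMI p ≤ (n : ℝ) * δ ∧
    r = (1 / (n : ℝ)) *
      condMI (fun (u : Fin k) (x : (Fin n → X1) × (Fin n → X2)) (y : Fin n → Y) =>
        p u x.1 x.2 * ∏ t, M.W (x.1 t) (x.2 t) (y t)) }

/-- `σ_n(δ)`. -/
def sigmaN (M : MAC X1 X2 Y) (n : ℕ) (δ : ℝ) : ℝ := sSup (sigmaSet M n δ)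

/-- `σ(δ) = lim_n σ_n(δ) = sup_n σ_n(δ)`. -/
def sigmaF (M : MAC X1 X2 Y) (δ : ℝ) : ℝ := ⨆ n : ℕ, sigmaN M (n + 1) δ

/-- `⌊2^{nR}⌋`, the size of a message (or link) index set. -/
def msgSize (n : ℕ) (R : ℝ) : ℕ := ⌊(2 : ℝ) ^ ((n : ℝ) * R)⌋₊

/-- A `(2^{nR₁}, 2^{nR₂}, n)`-code for the MAC `M` with a
`((c1,c2),(d1,d2))`-cooperation facilitator. -/
structure Code (M : MAC X1 X2 Y) (n : ℕ) (R1 R2 c1 c2 d1 d2 : ℝ) where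
  /-- encoder 1 to CF -/
  toCF1 : Fin (msgSize n R1) → Fin (msgSize n c1)
  /-- encoder 2 to CF -/
  toCF2 : Fin (msgSize n R2) → Fin (msgSize n c2)
  /-- CF to encoder 1 -/
  cf1 : Fin (msgSize n c1) → Fin (msgSize n c2) → Fin (msgSize n d1)
  /-- CF to encoder 2 -/
  cf2 : Fin (msgSize n c1) → Fin (msgSize n c2) → Fin (msgSize n d2)
  /-- encoder 1 -/
  f1 : Fin (msgSize n R1) → Fin (msgSize n d1) → Fin n → X1
  /-- encoder 2 -/
  f2 : Fin (msgSize n R2) → Fin (msgSize n d2) → Fin n → X2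
  /-- decoder -/
  dec : (Fin n → Y) → Fin (msgSize n R1) × Fin (msgSize n R2)

/-- The error probability `λ_n(w₁,w₂)` of the code `C` on the message pair `(w₁,w₂)`. -/
def errProb {M : MAC X1 X2 Y} {n : ℕ} {R1 R2 c1 c2 d1 d2 : ℝ}
    (C : Code M n R1 R2 c1 c2 d1 d2)
    (w1 : Fin (msgSize n R1)) (w2 : Fin (msgSize n R2)) : ℝ :=
  ∑ y : Fin n → Y,
    if C.dec y ≠ (w1, w2) then
      ∏ t, M.W (C.f1 w1 (C.cf1 (C.toCF1 w1) (C.toCF2 w2)) t)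
               (C.f2 w2 (C.cf2 (C.toCF1 w1) (C.toCF2 w2)) t) (y t)
    else 0

/-- Average error probability of a code. -/
def avgErr {M : MAC X1 X2 Y} {n : ℕ} {R1 R2 c1 c2 d1 d2 : ℝ}
    (C : Code M n R1 R2 c1 c2 d1 d2) : ℝ :=
  (1 / (2 : ℝ) ^ ((n : ℝ) * (R1 + R2))) * ∑ w1, ∑ w2, errProb C w1 w2

/-- Maximal error probability of a code. -/
def maxErr {M : MAC X1 X2 Y} {n : ℕ} {R1 R2 c1 c2 d1 d2 : ℝ}
    (C : Code M n R1 R2 c1 c2 d1 d2) : ℝ :=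
  sSup {e | ∃ w1 w2, e = errProb C w1 w2}

/-- `(R₁,R₂)` is achievable under the average-error criterion for the MAC `M` with a
`((c1,c2),(d1,d2))`-CF. -/
def AchievableAvg (M : MAC X1 X2 Y) (c1 c2 d1 d2 : ℝ) (R : ℝ × ℝ) : Prop :=
  0 ≤ R.1 ∧ 0 ≤ R.2 ∧
  ∃ C : (n : ℕ) → Code M (n + 1) R.1 R.2 c1 c2 d1 d2,
    Filter.Tendsto (fun n => avgErr (C n)) Filter.atTop (nhds 0)

/-- `(R₁,R₂)` is achievable under the maximal-error criterion. -/
def AchievableMax (M : MAC X1 X2 Y) (c1 c2 d1 d2 : ℝ) (R : ℝ × ℝ) : Prop :=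
  0 ≤ R.1 ∧ 0 ≤ R.2 ∧
  ∃ C : (n : ℕ) → Code M (n + 1) R.1 R.2 c1 c2 d1 d2,
    Filter.Tendsto (fun n => maxErr (C n)) Filter.atTop (nhds 0)

/-- Average-error sum-capacity `C_sum,avg(C_in, C_out)`. -/
def CsumAvg (M : MAC X1 X2 Y) (Cin Cout : ℝ × ℝ) : ℝ :=
  sSup {s | ∃ R ∈ closure {R : ℝ × ℝ | AchievableAvg M Cin.1 Cin.2 Cout.1 Cout.2 R},
    s = R.1 + R.2}

/-- Maximal-error sum-capacity `C_sum,max(C_in, C_out)`. -/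
def CsumMax (M : MAC X1 X2 Y) (Cin Cout : ℝ × ℝ) : ℝ :=
  sSup {s | ∃ R ∈ closure {R : ℝ × ℝ | AchievableMax M Cin.1 Cin.2 Cout.1 Cout.2 R},
    s = R.1 + R.2}

/-- `max_{p(x₁,x₂)} I(X₁,X₂;Y)`, used to specify when CF input links are large enough
that the CF has full knowledge of both messages. -/
def maxMI (M : MAC X1 X2 Y) : ℝ :=
  sSup {r | ∃ p : X1 × X2 → ℝ, (∀ x, 0 ≤ p x) ∧ (∑ x, p x = 1) ∧
    r = condMI (fun (_ : Unit) (x : X1 × X2) (y : Y) => p x * M.W x.1 x.2 y)}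

end

noncomputable section Aux

open Real Set

variable {A B C U : Type} [Fintype A] [Fintype B] [Fintype C] [Fintype U]

private lemma mul_logb_mul (x y : ℝ) :
    x * y * Real.logb 2 (x * y)
      = y * (x * Real.logb 2 x) + x * (y * Real.logb 2 y) := by
  rcases eq_or_ne x 0 with hx | hx
  · simp [hx]
  rcases eq_or_ne y 0 with hy | hy
  · simp [hy]
  rw [Real.logb_mul hx hy]; ring

private lemma continuous_mul_logb : Continuous fun x : ℝ => x * Real.logb 2 x := by
  have h : Continuous fun x : ℝ => x * Real.log x / Real.log 2 :=
    Real.continuous_mul_log.div_const _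
  have e : (fun x : ℝ => x * Real.logb 2 x) = fun x : ℝ => x * Real.log x / Real.log 2 := by
    funext x; rw [Real.logb]; ring
  rw [e]; exact h

private lemma ent2_continuous {α : Type} [Fintype α] :
    Continuous fun p : α → ℝ => ent2 p := by
  unfold ent2
  exact (continuous_finset_sum _ fun a _ =>
    continuous_mul_logb.comp (continuous_apply a)).neg

private lemma ent2_mul {β : Type} [Fintype β] (s : U → ℝ) (r : U → β → ℝ)
    (hr1 : ∀ u, s u ≠ 0 → ∑ b, r u b = 1) :
    ent2 (fun ub : U × β => s ub.1 * r ub.1 ub.2) = ent2 s + ∑ u, s u * ent2 (r u) := by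
  unfold ent2
  rw [Fintype.sum_prod_type]
  have key : ∀ u : U, ∑ b, s u * r u b * Real.logb 2 (s u * r u b)
      = s u * Real.logb 2 (s u) + s u * ∑ b, r u b * Real.logb 2 (r u b) := by
    intro u
    rcases eq_or_ne (s u) 0 with hs | hs
    · simp [hs]
    · calc ∑ b, s u * r u b * Real.logb 2 (s u * r u b)
          = ∑ b, (r u b * (s u * Real.logb 2 (s u)) + s u * (r u b * Real.logb 2 (r u b))) :=
            Finset.sum_congr rfl fun b _ => mul_logb_mul (s u) (r u b)
        _ = (∑ b, r u b) * (s u * Real.logb 2 (s u))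
              + s u * ∑ b, r u b * Real.logb 2 (r u b) := by
            rw [Finset.sum_add_distrib, ← Finset.sum_mul, ← Finset.mul_sum]
        _ = s u * Real.logb 2 (s u) + s u * ∑ b, r u b * Real.logb 2 (r u b) := by
            rw [hr1 u hs, one_mul]
  rw [Finset.sum_congr rfl fun u _ => key u]
  rw [Finset.sum_add_distrib]
  simp only [mul_neg, Finset.mul_sum]
  rw [Finset.sum_neg_distrib]
  ring

private def gOne (ρ : A → B → ℝ) : ℝ :=
  ent2 (fun a : A => ∑ b, ρ a b) + ent2 (fun b : B => ∑ a, ρ a b)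
    - ent2 (fun x : A × B => ρ x.1 x.2)

private def gTwo (N : A → B → C → ℝ) (ρ : A → B → ℝ) : ℝ :=
  ent2 (fun x : A × B => ρ x.1 x.2)
    + ent2 (fun c : C => ∑ x : A × B, ρ x.1 x.2 * N x.1 x.2 c)
    - ent2 (fun z : (A × B) × C => ρ z.1.1 z.1.2 * N z.1.1 z.1.2 z.2)

private lemma condMI_decomp (p : U → A → B → ℝ) (s : U → ℝ) (r : U → A → B → ℝ)
    (hp : ∀ u a b, p u a b = s u * r u a b)
    (hr1 : ∀ u, s u ≠ 0 → ∑ a, ∑ b, r u a b = 1) :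
    condMI p = ∑ u, s u * gOne (r u) := by
  have e1 : ent2 (fun ua : U × A => ∑ b, p ua.1 ua.2 b)
      = ent2 s + ∑ u, s u * ent2 (fun a => ∑ b, r u a b) := by
    rw [show (fun ua : U × A => ∑ b, p ua.1 ua.2 b)
        = (fun ua : U × A => s ua.1 * ∑ b, r ua.1 ua.2 b) from
      funext fun ua => by simp only [hp, Finset.mul_sum]]
    exact ent2_mul s (fun u a => ∑ b, r u a b) hr1
  have e2 : ent2 (fun ub : U × B => ∑ a, p ub.1 a ub.2)
      = ent2 s + ∑ u, s u * ent2 (fun b => ∑ a, r u a b) := by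
    rw [show (fun ub : U × B => ∑ a, p ub.1 a ub.2)
        = (fun ub : U × B => s ub.1 * ∑ a, r ub.1 a ub.2) from
      funext fun ub => by simp only [hp, Finset.mul_sum]]
    exact ent2_mul s (fun u b => ∑ a, r u a b)
      (fun u hs => by rw [Finset.sum_comm]; exact hr1 u hs)
  have e3 : ent2 (fun z : U × A × B => p z.1 z.2.1 z.2.2)
      = ent2 s + ∑ u, s u * ent2 (fun x : A × B => r u x.1 x.2) := by
    rw [show (fun z : U × A × B => p z.1 z.2.1 z.2.2)
        = (fun z : U × A × B => s z.1 * r z.1 z.2.1 z.2.2) from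
      funext fun z => by simp only [hp]]
    exact ent2_mul s (fun u (x : A × B) => r u x.1 x.2)
      (fun u hs => by rw [Fintype.sum_prod_type]; exact hr1 u hs)
  have e4 : (fun u : U => ∑ a, ∑ b, p u a b) = s := by
    funext u
    rcases eq_or_ne (s u) 0 with hs | hs
    · simp [hp, hs]
    · have h : ∑ a, ∑ b, p u a b = s u * ∑ a, ∑ b, r u a b := by
        simp only [hp, Finset.mul_sum]
      rw [h, hr1 u hs, mul_one]
  unfold condMI
  rw [e1, e2, e3, e4]
  simp only [gOne, mul_add, mul_sub, Finset.sum_add_distrib, Finset.sum_sub_distrib]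
  ring

private lemma condMI_chan_decomp (N : A → B → C → ℝ) (hN1 : ∀ a b, ∑ c, N a b c = 1)
    (p : U → A → B → ℝ) (s : U → ℝ) (r : U → A → B → ℝ)
    (hp : ∀ u a b, p u a b = s u * r u a b)
    (hr1 : ∀ u, s u ≠ 0 → ∑ a, ∑ b, r u a b = 1) :
    condMI (fun u (x : A × B) c => p u x.1 x.2 * N x.1 x.2 c)
      = ∑ u, s u * gTwo N (r u) := by
  have hrow : ∀ u, s u ≠ 0 → ∑ x : A × B, r u x.1 x.2 = 1 := by
    intro u hs; rw [Fintype.sum_prod_type]; exact hr1 u hs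
  have e1 : ent2 (fun ua : U × (A × B) => ∑ c, p ua.1 ua.2.1 ua.2.2 * N ua.2.1 ua.2.2 c)
      = ent2 s + ∑ u, s u * ent2 (fun x : A × B => r u x.1 x.2) := by
    rw [show (fun ua : U × (A × B) => ∑ c, p ua.1 ua.2.1 ua.2.2 * N ua.2.1 ua.2.2 c)
        = (fun ua : U × (A × B) => s ua.1 * r ua.1 ua.2.1 ua.2.2) from
      funext fun ua => by rw [← Finset.mul_sum, hN1, mul_one, hp]]
    exact ent2_mul s (fun u (x : A × B) => r u x.1 x.2) hrow
  have e2 : ent2 (fun uc : U × C => ∑ x : A × B, p uc.1 x.1 x.2 * N x.1 x.2 uc.2)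
      = ent2 s + ∑ u, s u * ent2 (fun c => ∑ x : A × B, r u x.1 x.2 * N x.1 x.2 c) := by
    rw [show (fun uc : U × C => ∑ x : A × B, p uc.1 x.1 x.2 * N x.1 x.2 uc.2)
        = (fun uc : U × C => s uc.1 * ∑ x : A × B, r uc.1 x.1 x.2 * N x.1 x.2 uc.2) from
      funext fun uc => by simp only [hp, Finset.mul_sum, mul_assoc]]
    refine ent2_mul s (fun u c => ∑ x : A × B, r u x.1 x.2 * N x.1 x.2 c) ?_
    intro u hs
    rw [Finset.sum_comm]
    calc ∑ x : A × B, ∑ c, r u x.1 x.2 * N x.1 x.2 c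
        = ∑ x : A × B, r u x.1 x.2 := by
          refine Finset.sum_congr rfl fun x _ => ?_
          rw [← Finset.mul_sum, hN1, mul_one]
      _ = 1 := hrow u hs
  have e3 : ent2 (fun z : U × (A × B) × C => p z.1 z.2.1.1 z.2.1.2 * N z.2.1.1 z.2.1.2 z.2.2)
      = ent2 s + ∑ u, s u * ent2 (fun w : (A × B) × C => r u w.1.1 w.1.2 * N w.1.1 w.1.2 w.2) := by
    rw [show (fun z : U × (A × B) × C => p z.1 z.2.1.1 z.2.1.2 * N z.2.1.1 z.2.1.2 z.2.2)
        = (fun z : U × (A × B) × C =>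
            s z.1 * (r z.1 z.2.1.1 z.2.1.2 * N z.2.1.1 z.2.1.2 z.2.2)) from
      funext fun z => by rw [hp, mul_assoc]]
    refine ent2_mul s (fun u (w : (A × B) × C) => r u w.1.1 w.1.2 * N w.1.1 w.1.2 w.2) ?_
    intro u hs
    rw [Fintype.sum_prod_type]
    calc ∑ x : A × B, ∑ c, r u x.1 x.2 * N x.1 x.2 c
        = ∑ x : A × B, r u x.1 x.2 := by
          refine Finset.sum_congr rfl fun x _ => ?_
          rw [← Finset.mul_sum, hN1, mul_one]
      _ = 1 := hrow u hs
  have e4 : (fun u : U => ∑ x : A × B, ∑ c, p u x.1 x.2 * N x.1 x.2 c) = s := by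
    funext u
    have h : ∑ x : A × B, ∑ c, p u x.1 x.2 * N x.1 x.2 c = ∑ x : A × B, p u x.1 x.2 := by
      refine Finset.sum_congr rfl fun x _ => ?_
      rw [← Finset.mul_sum, hN1, mul_one]
    rw [h]
    rcases eq_or_ne (s u) 0 with hs | hs
    · simp [hp, hs]
    · have h2 : ∑ x : A × B, p u x.1 x.2 = s u * ∑ x : A × B, r u x.1 x.2 := by
        simp only [hp, Finset.mul_sum]
      rw [h2, hrow u hs, mul_one]
  unfold condMI
  rw [e1, e2, e3, e4]
  simp only [gTwo, mul_add, mul_sub, Finset.sum_add_distrib, Finset.sum_sub_distrib]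
  ring

open scoped Classical

private def PMF2set (A B : Type) [Fintype A] [Fintype B] : Set (A → B → ℝ) :=
  {ρ | (∀ a b, 0 ≤ ρ a b) ∧ ∑ a, ∑ b, ρ a b = 1}

private def ptMass (A B : Type) [Fintype A] [Fintype B] [Nonempty A] [Nonempty B] :
    A → B → ℝ :=
  fun a b => (if a = Classical.arbitrary A then 1 else 0)
    * (if b = Classical.arbitrary B then 1 else 0)

private lemma ptMass_mem [Nonempty A] [Nonempty B] : ptMass A B ∈ PMF2set A B := by
  constructor
  · intro a b
    unfold ptMass
    positivity
  · unfold ptMass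
    rw [show ∑ a, ∑ b, (if a = Classical.arbitrary A then (1:ℝ) else 0)
        * (if b = Classical.arbitrary B then (1:ℝ) else 0)
      = ∑ a, (if a = Classical.arbitrary A then (1:ℝ) else 0)
        * ∑ b, (if b = Classical.arbitrary B then (1:ℝ) else 0) from
      Finset.sum_congr rfl fun a _ => (Finset.mul_sum _ _ _).symm]
    rw [← Finset.sum_mul]
    simp

private lemma ent2_eq_zero {α : Type} [Fintype α] (p : α → ℝ)
    (h : ∀ a, p a = 0 ∨ p a = 1) : ent2 p = 0 := by
  unfold ent2
  rw [Finset.sum_eq_zero, neg_zero]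
  intro a _
  rcases h a with h' | h' <;> simp [h']

private lemma gOne_ptMass [Nonempty A] [Nonempty B] : gOne (ptMass A B) = 0 := by
  unfold gOne
  rw [ent2_eq_zero, ent2_eq_zero, ent2_eq_zero]
  · ring
  · intro x
    unfold ptMass
    by_cases h1 : x.1 = Classical.arbitrary A <;> by_cases h2 : x.2 = Classical.arbitrary B <;>
      simp [h1, h2]
  · intro b
    unfold ptMass
    rw [← Finset.sum_mul]
    by_cases h2 : b = Classical.arbitrary B <;> simp [h2]
  · intro a
    unfold ptMass
    rw [← Finset.mul_sum]
    by_cases h1 : a = Classical.arbitrary A <;> simp [h1]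

private lemma pmf2_compact : IsCompact (PMF2set A B) := by
  have hpi : IsCompact (Set.univ.pi fun _ : A => Set.univ.pi fun _ : B => Set.Icc (0:ℝ) 1) :=
    isCompact_univ_pi fun _ => isCompact_univ_pi fun _ => isCompact_Icc
  refine hpi.of_isClosed_subset ?_ ?_
  · have : PMF2set A B
        = (⋂ a, ⋂ b, {ρ : A → B → ℝ | 0 ≤ ρ a b}) ∩ {ρ | ∑ a, ∑ b, ρ a b = 1} := by
      ext ρ; simp [PMF2set, Set.mem_iInter]
    rw [this]
    refine IsClosed.inter (isClosed_iInter fun a => isClosed_iInter fun b => ?_) ?_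
    · exact isClosed_le continuous_const ((continuous_apply b).comp (continuous_apply a))
    · exact isClosed_eq (continuous_finset_sum _ fun a _ =>
        continuous_finset_sum _ fun b _ => (continuous_apply b).comp (continuous_apply a))
        continuous_const
  · rintro ρ ⟨h0, h1⟩
    intro a _
    intro b _
    refine ⟨h0 a b, ?_⟩
    calc ρ a b ≤ ∑ b', ρ a b' :=
          Finset.single_le_sum (fun b' _ => h0 a b') (Finset.mem_univ b)
      _ ≤ ∑ a', ∑ b', ρ a' b' :=
          Finset.single_le_sum (f := fun a' => ∑ b', ρ a' b')
            (fun a' _ => Finset.sum_nonneg fun b' _ => h0 a' b') (Finset.mem_univ a)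
      _ = 1 := h1

private lemma gOne_continuous : Continuous (gOne (A := A) (B := B)) := by
  unfold gOne
  refine Continuous.sub (Continuous.add ?_ ?_) ?_
  · exact ent2_continuous.comp (continuous_pi fun a =>
      continuous_finset_sum _ fun b _ => (continuous_apply b).comp (continuous_apply a))
  · exact ent2_continuous.comp (continuous_pi fun b =>
      continuous_finset_sum _ fun a _ => (continuous_apply b).comp (continuous_apply a))
  · exact ent2_continuous.comp (continuous_pi fun x =>
      (continuous_apply x.2).comp (continuous_apply x.1))

private lemma gTwo_continuous (N : A → B → C → ℝ) : Continuous (gTwo N) := by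
  unfold gTwo
  refine Continuous.sub (Continuous.add ?_ ?_) ?_
  · exact ent2_continuous.comp (continuous_pi fun x =>
      (continuous_apply x.2).comp (continuous_apply x.1))
  · exact ent2_continuous.comp (continuous_pi fun c =>
      continuous_finset_sum _ fun x _ =>
        (((continuous_apply x.2).comp (continuous_apply x.1) :
            Continuous fun a : A → B → ℝ => a x.1 x.2).mul continuous_const))
  · exact ent2_continuous.comp (continuous_pi fun z =>
      (((continuous_apply z.1.2).comp (continuous_apply z.1.1) :
          Continuous fun a : A → B → ℝ => a z.1.1 z.1.2).mul continuous_const))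

private lemma sum_extend {n m : ℕ} (h : n ≤ m) {M : Type} [AddCommMonoid M]
    (g : Fin n → M) (g3 : Fin m → M)
    (hg : ∀ (i : Fin m) (h' : (i : ℕ) < n), g3 i = g ⟨i, h'⟩)
    (hz : ∀ i : Fin m, ¬((i : ℕ) < n) → g3 i = 0) :
    ∑ i, g3 i = ∑ j, g j := by
  classical
  rw [← Finset.sum_filter_of_ne (s := Finset.univ) (p := fun i : Fin m => (i : ℕ) < n)
    (fun i _ hne => by by_contra hc; exact hne (hz i hc))]
  refine Finset.sum_bij' (fun i hi => (⟨(i : ℕ), (Finset.mem_filter.1 hi).2⟩ : Fin n))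
    (fun j _ => (⟨(j : ℕ), lt_of_lt_of_le j.2 h⟩ : Fin m)) ?_ ?_ ?_ ?_ ?_
  · intro i hi; exact Finset.mem_univ _
  · intro j _; simp [j.2]
  · intro i hi; simp
  · intro j _; simp
  · intro i hi; exact hg i (Finset.mem_filter.1 hi).2

private lemma isCompact_convexHull_pair {T : Set (ℝ × ℝ)} (hT : IsCompact T)
    (hTne : T.Nonempty) : IsCompact (convexHull ℝ T) := by
  classical
  obtain ⟨z0, hz0⟩ := hTne
  set S : Set (Fin 3 → ℝ) := {w | (∀ i, 0 ≤ w i) ∧ ∑ i, w i = 1} with hS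
  set P : Set (Fin 3 → ℝ × ℝ) := Set.univ.pi fun _ => T with hP
  have hScomp : IsCompact S := by
    have hpi : IsCompact (Set.univ.pi fun _ : Fin 3 => Set.Icc (0:ℝ) 1) :=
      isCompact_univ_pi fun _ => isCompact_Icc
    refine hpi.of_isClosed_subset ?_ ?_
    · have : S = (⋂ i, {w : Fin 3 → ℝ | 0 ≤ w i}) ∩ {w | ∑ i, w i = 1} := by
        ext w; simp [hS, Set.mem_iInter]
      rw [this]
      exact IsClosed.inter (isClosed_iInter fun i =>
          isClosed_le continuous_const (continuous_apply i))
        (isClosed_eq (continuous_finset_sum _ fun i _ => continuous_apply i) continuous_const)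
    · rintro w ⟨h0, h1⟩ i _
      refine ⟨h0 i, ?_⟩
      calc w i ≤ ∑ j, w j := Finset.single_le_sum (fun j _ => h0 j) (Finset.mem_univ i)
        _ = 1 := h1
  have hPcomp : IsCompact P := isCompact_univ_pi fun _ => hT
  have hprod : IsCompact (S ×ˢ P) := hScomp.prod hPcomp
  have hΦ : Continuous fun wz : (Fin 3 → ℝ) × (Fin 3 → ℝ × ℝ) => ∑ i, wz.1 i • wz.2 i :=
    continuous_finset_sum _ fun i _ =>
      ((continuous_apply i).comp continuous_fst).smul ((continuous_apply i).comp continuous_snd)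
  have himg : convexHull ℝ T
      = (fun wz : (Fin 3 → ℝ) × (Fin 3 → ℝ × ℝ) => ∑ i, wz.1 i • wz.2 i) '' (S ×ˢ P) := by
    apply Set.Subset.antisymm
    · intro x hx
      rw [convexHull_eq_union] at hx
      simp only [Set.mem_iUnion] at hx
      obtain ⟨t, hts, hai, hxt⟩ := hx
      have hcard : t.card ≤ 3 := by
        have h1 := hai.card_le_finrank_succ
        have h2 : Module.finrank ℝ (vectorSpan ℝ (Set.range ((↑) : t → ℝ × ℝ))) + 1
            ≤ Module.finrank ℝ (ℝ × ℝ) + 1 := by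
          have := Submodule.finrank_le (vectorSpan ℝ (Set.range ((↑) : t → ℝ × ℝ)))
          omega
        have h3 : Module.finrank ℝ (ℝ × ℝ) = 2 := by
          simp [Module.finrank_prod]
        rw [Fintype.card_coe] at h1
        omega
      rw [Finset.convexHull_eq] at hxt
      obtain ⟨w, hw0, hw1, hcm⟩ := hxt
      rw [Finset.centerMass_eq_of_sum_1 _ _ hw1] at hcm
      simp only [id_eq] at hcm
      set n := t.card with hn
      set e : Fin n ≃ {x // x ∈ t} := t.equivFin.symm with he
      set w3 : Fin 3 → ℝ := fun i => if h : (i : ℕ) < n then w (e ⟨i, h⟩) else 0 with hw3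
      set q3 : Fin 3 → ℝ × ℝ := fun i => if h : (i : ℕ) < n then (e ⟨i, h⟩ : ℝ × ℝ) else z0
        with hq3
      refine ⟨(w3, q3), ⟨?_, ?_⟩, ?_⟩
      · constructor
        · intro i
          rw [hw3]
          by_cases h : (i : ℕ) < n
          · simp only [h, dif_pos]
            exact hw0 _ (e ⟨i, h⟩).2
          · simp [h]
        · rw [show ∑ i, w3 i = ∑ j : Fin n, w (e j) from
            sum_extend hcard (fun j => w (e j)) w3
              (fun i h' => by simp [hw3, h'])
              (fun i h' => by simp [hw3, h'])]
          rw [← hw1]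
          rw [← Finset.sum_coe_sort t w]
          exact Equiv.sum_comp e fun x => w x
      · intro i _
        rw [hq3]
        by_cases h : (i : ℕ) < n
        · simp only [h, dif_pos]
          exact hts (e ⟨i, h⟩).2
        · simp only [h, dif_neg, not_false_iff]
          exact hz0
      · simp only
        rw [show ∑ i, w3 i • q3 i = ∑ j : Fin n, w (e j) • ((e j : ℝ × ℝ)) from
          sum_extend hcard (fun j => w (e j) • ((e j : ℝ × ℝ))) (fun i => w3 i • q3 i)
            (fun i h' => by simp [hw3, hq3, h'])
            (fun i h' => by simp [hw3, h'])]
        rw [← hcm]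
        rw [← Finset.sum_coe_sort t (fun y => w y • y)]
        exact Equiv.sum_comp e fun x => w (x : ℝ × ℝ) • (x : ℝ × ℝ)
    · rintro x ⟨⟨w, q⟩, ⟨⟨hw0, hw1⟩, hq⟩, rfl⟩
      exact (convex_convexHull ℝ T).sum_mem (fun i _ => hw0 i) hw1
        (fun i _ => subset_convexHull ℝ T (hq i (Set.mem_univ i)))
  rw [himg]
  exact hprod.image hΦ

private lemma Kcont (K : Set (ℝ × ℝ)) (hK : IsCompact K) (hconv : Convex ℝ K)
    (v0 : ℝ) (hv0 : (0, v0) ∈ K) :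
    ContinuousOn (fun δ : ℝ => sSup {v : ℝ | ∃ c ≤ δ, (c, v) ∈ K}) (Set.Ici 0) := by
  set f : ℝ → ℝ := fun δ => sSup {v | ∃ c ≤ δ, (c, v) ∈ K} with hf
  have hsub : ∀ δ : ℝ, {v | ∃ c ≤ δ, (c, v) ∈ K} ⊆ Prod.snd '' K := by
    rintro δ v ⟨c, _, h⟩; exact ⟨(c, v), h, rfl⟩
  have hbddK : BddAbove (Prod.snd '' K) := (hK.image continuous_snd).bddAbove
  have hbdd : ∀ δ : ℝ, BddAbove {v | ∃ c ≤ δ, (c, v) ∈ K} := fun δ => hbddK.mono (hsub δ)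
  have hne : ∀ δ : ℝ, 0 ≤ δ → Set.Nonempty {v | ∃ c ≤ δ, (c, v) ∈ K} :=
    fun δ hδ => ⟨v0, 0, hδ, hv0⟩
  have hmono : ∀ {δ δ' : ℝ}, 0 ≤ δ → δ ≤ δ' → f δ ≤ f δ' := by
    intro δ δ' h0 h
    exact csSup_le_csSup (hbdd δ') (hne δ h0) (fun v ⟨c, hc, hcv⟩ => ⟨c, le_trans hc h, hcv⟩)
  have hmem_le : ∀ {δ : ℝ} {z : ℝ × ℝ}, z ∈ K → z.1 ≤ δ → z.2 ≤ f δ := by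
    intro δ z hz h1
    exact le_csSup (hbdd δ) ⟨z.1, h1, by simpa using hz⟩
  -- bound on second coordinates
  obtain ⟨R, hR⟩ := hK.isBounded.subset_closedBall 0
  have hMv : ∀ z ∈ K, |z.2| ≤ R := by
    intro z hz
    have h1 : ‖z‖ ≤ R := by
      have := hR hz
      rwa [Metric.mem_closedBall, dist_zero_right] at this
    exact le_trans (norm_snd_le z) h1
  have hR0 : 0 ≤ R := le_trans (abs_nonneg _) (hMv _ hv0)
  intro δ0 hδ0
  rw [Metric.continuousWithinAt_iff]
  intro ε hε
  -- upper semicontinuity via compactness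
  have husc : ∃ η > 0, ∀ z ∈ K, z.1 ≤ δ0 + η → z.2 ≤ f δ0 + ε / 2 := by
    set K' := K ∩ {z : ℝ × ℝ | f δ0 + ε / 2 ≤ z.2} with hK'def
    have hK'c : IsCompact K' := hK.inter_right (isClosed_le continuous_const continuous_snd)
    rcases K'.eq_empty_or_nonempty with hemp | hne'
    · refine ⟨1, one_pos, fun z hz h1 => ?_⟩
      by_contra hcon
      have hzK' : z ∈ K' := ⟨hz, le_of_not_ge hcon⟩
      rw [hemp] at hzK'
      exact hzK'
    · obtain ⟨m, hm⟩ := (hK'c.image continuous_fst).exists_isLeast (hne'.image _)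
      obtain ⟨zs, hzsK', hzs1⟩ := hm.1
      have hmgt : δ0 < m := by
        by_contra hle
        push_neg at hle
        have h1 : zs.2 ≤ f δ0 := hmem_le hzsK'.1 (by rw [hzs1]; exact hle)
        have h2 : f δ0 + ε / 2 ≤ zs.2 := hzsK'.2
        linarith
      refine ⟨(m - δ0) / 2, by linarith, fun z hz h1 => ?_⟩
      by_contra hcon
      have hzK' : z ∈ K' := ⟨hz, le_of_not_ge hcon⟩
      have := hm.2 ⟨z, hzK', rfl⟩
      linarith
  obtain ⟨η1, hη1pos, hη1⟩ := husc
  have hupper : ∀ δ : ℝ, 0 ≤ δ → δ ≤ δ0 + η1 → f δ ≤ f δ0 + ε / 2 := by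
    intro δ h0 hδ
    exact csSup_le (hne δ h0) (fun v ⟨c, hc, hcv⟩ => hη1 (c, v) hcv (le_trans hc hδ))
  -- lower bound witness
  have hfδ0_lt : f δ0 - ε / 4 < f δ0 := by linarith
  obtain ⟨vbar, hvbar_mem, hvbar⟩ := exists_lt_of_lt_csSup (hne δ0 hδ0) hfδ0_lt
  obtain ⟨cbar, hcbar, hcvbar⟩ := hvbar_mem
  rcases eq_or_lt_of_le (Set.mem_Ici.mp hδ0) with hδ0eq | hδ0pos
  · -- δ0 = 0
    refine ⟨η1, hη1pos, fun y hy hdist => ?_⟩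
    have hy0 : (0:ℝ) ≤ y := hy
    have hyδ0 : δ0 ≤ y := by rw [← hδ0eq]; exact hy0
    have h1 : f δ0 ≤ f y := hmono hδ0 hyδ0
    have h2 : f y ≤ f δ0 + ε / 2 := by
      refine hupper y hy0 ?_
      rw [Real.dist_eq] at hdist
      have := abs_lt.1 hdist
      linarith [this.1, this.2]
    rw [Real.dist_eq, abs_lt]
    constructor <;> linarith
  · -- δ0 > 0
    set η2 : ℝ := δ0 * ε / (4 * (R + R + 1)) with hη2
    have hη2pos : 0 < η2 := by
      apply div_pos (mul_pos hδ0pos hε)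
      linarith
    refine ⟨min η1 (min η2 δ0), by positivity, fun y hy hdist => ?_⟩
    have hy0 : (0:ℝ) ≤ y := hy
    rw [Real.dist_eq] at hdist
    have habs := abs_lt.1 hdist
    have hyup : y ≤ δ0 + η1 :=
      le_of_lt (lt_of_lt_of_le (by linarith [habs.2] : y < δ0 + min η1 (min η2 δ0))
        (by simp [min_le_left, add_le_add_iff_left]))
    have h2 : f y ≤ f δ0 + ε / 2 := hupper y hy0 hyup
    have h1 : f δ0 - ε < f y := by
      rcases le_or_gt δ0 y with hge | hlt
      · have := hmono hδ0 hge
        linarith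
      · -- mixing
        set t : ℝ := y / δ0 with ht
        have ht0 : 0 ≤ t := div_nonneg hy0 hδ0pos.le
        have ht1 : t ≤ 1 := by
          rw [div_le_one hδ0pos]; exact hlt.le
        have hmix : t • ((cbar, vbar) : ℝ × ℝ) + (1 - t) • ((0, v0) : ℝ × ℝ) ∈ K :=
          hconv hcvbar hv0 ht0 (by linarith) (by ring)
        have hmixeq : t • ((cbar, vbar) : ℝ × ℝ) + (1 - t) • ((0, v0) : ℝ × ℝ)
            = (t * cbar, t * vbar + (1 - t) * v0) := by
          simp [Prod.ext_iff, smul_eq_mul]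
        rw [hmixeq] at hmix
        have hc1 : t * cbar ≤ y := by
          calc t * cbar ≤ t * δ0 := mul_le_mul_of_nonneg_left hcbar ht0
            _ = y := by rw [ht]; field_simp
        have hflow : t * vbar + (1 - t) * v0 ≤ f y := hmem_le hmix hc1
        -- estimate
        have hvbarR : |vbar| ≤ R := hMv _ hcvbar
        have hv0R : |v0| ≤ R := hMv _ hv0
        have hvv : vbar - v0 ≤ R + R := by
          have := abs_le.1 hvbarR
          have := abs_le.1 hv0R
          linarith [(abs_le.1 hvbarR).2, (abs_le.1 hv0R).1]
        have hd : δ0 - y < η2 := by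
          have hm : min η1 (min η2 δ0) ≤ η2 := le_trans (min_le_right _ _) (min_le_left _ _)
          linarith [habs.1]
        have h1t : 1 - t = (δ0 - y) / δ0 := by
          rw [ht]; field_simp
        have hkey : (1 - t) * (vbar - v0) ≤ ε / 2 := by
          rw [h1t, div_mul_eq_mul_div, div_le_iff₀ hδ0pos]
          have hle1 : (δ0 - y) * (vbar - v0) ≤ (δ0 - y) * (R + R) :=
            mul_le_mul_of_nonneg_left hvv (by linarith)
          have hle2 : (δ0 - y) * (R + R) ≤ η2 * (R + R) :=
            mul_le_mul_of_nonneg_right hd.le (by linarith)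
          have hle3 : η2 * (R + R) ≤ ε / 2 * δ0 := by
            rw [hη2, div_mul_eq_mul_div, div_le_iff₀ (by linarith : (0:ℝ) < 4 * (R + R + 1))]
            nlinarith [mul_pos hδ0pos hε]
          linarith
        have hexp : vbar + ε / 4 - (t * vbar + (1 - t) * v0)
            = (1 - t) * (vbar - v0) + ε / 4 := by ring
        have : f δ0 < vbar + ε / 4 := by linarith
        linarith
    rw [Real.dist_eq, abs_lt]
    constructor <;> linarith

private lemma sigma_set_eq [Nonempty A] [Nonempty B]
    (N : A → B → C → ℝ) (hN1 : ∀ a b, ∑ c, N a b c = 1) (δ : ℝ) :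
    {v : ℝ | ∃ (k : ℕ) (p : Fin k → A → B → ℝ), IsPMF3 p ∧ condMI p ≤ δ ∧
        v = condMI (fun u (x : A × B) c => p u x.1 x.2 * N x.1 x.2 c)}
      = {v : ℝ | ∃ c ≤ δ,
          (c, v) ∈ convexHull ℝ ((fun ρ => (gOne ρ, gTwo N ρ)) '' PMF2set A B)} := by
  classical
  ext v
  simp only [Set.mem_setOf_eq]
  constructor
  · rintro ⟨k, p, ⟨hp0, hp1⟩, hle, rfl⟩
    set s : Fin k → ℝ := fun u => ∑ a, ∑ b, p u a b with hs
    have hs0 : ∀ u, 0 ≤ s u := fun u =>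
      Finset.sum_nonneg fun a _ => Finset.sum_nonneg fun b _ => hp0 u a b
    have hssum : ∑ u, s u = 1 := hp1
    set r : Fin k → A → B → ℝ := fun u =>
      if s u = 0 then ptMass A B else fun a b => p u a b / s u with hr
    have hpzero : ∀ u, s u = 0 → ∀ a b, p u a b = 0 := by
      intro u hsu a b
      have h1 : ∀ a' ∈ Finset.univ, (0:ℝ) ≤ ∑ b', p u a' b' :=
        fun a' _ => Finset.sum_nonneg fun b' _ => hp0 u a' b'
      have h2 : ∑ b', p u a b' = 0 :=
        (Finset.sum_eq_zero_iff_of_nonneg h1).1 hsu a (Finset.mem_univ a)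
      exact (Finset.sum_eq_zero_iff_of_nonneg fun b' _ => hp0 u a b').1 h2 b (Finset.mem_univ b)
    have hpr : ∀ u a b, p u a b = s u * r u a b := by
      intro u a b
      rcases eq_or_ne (s u) 0 with hsu | hsu
      · rw [hsu, zero_mul]; exact hpzero u hsu a b
      · have hru : r u = fun a b => p u a b / s u := by rw [hr]; exact if_neg hsu
        rw [hru, mul_comm]
        exact (div_mul_cancel₀ _ hsu).symm
    have hr1 : ∀ u, s u ≠ 0 → ∑ a, ∑ b, r u a b = 1 := by
      intro u hsu
      have hru : r u = fun a b => p u a b / s u := by rw [hr]; exact if_neg hsu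
      simp only [hru]
      rw [show ∑ a, ∑ b, p u a b / s u = (∑ a, ∑ b, p u a b) / s u by
        rw [Finset.sum_div]; exact Finset.sum_congr rfl fun a _ => (Finset.sum_div _ _ _).symm]
      exact div_self hsu
    have hrP : ∀ u, r u ∈ PMF2set A B := by
      intro u
      rcases eq_or_ne (s u) 0 with hsu | hsu
      · rw [hr]; simp only [if_pos hsu]; exact ptMass_mem
      · have hru : r u = fun a b => p u a b / s u := by rw [hr]; exact if_neg hsu
        constructor
        · intro a b
          rw [hru]
          exact div_nonneg (hp0 u a b) (hs0 u)
        · exact hr1 u hsu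
    refine ⟨condMI p, hle, ?_⟩
    have hd1 := condMI_decomp p s r hpr hr1
    have hd2 := condMI_chan_decomp N hN1 p s r hpr hr1
    rw [hd1, hd2]
    have hmem : (∑ u, s u * gOne (r u), ∑ u, s u * gTwo N (r u))
        = ∑ u, s u • ((gOne (r u), gTwo N (r u)) : ℝ × ℝ) := by
      rw [Prod.ext_iff]
      constructor
      · rw [Prod.fst_sum]; simp [smul_eq_mul]
      · rw [Prod.snd_sum]; simp [smul_eq_mul]
    rw [hmem]
    have hcm := Finset.centerMass_mem_convexHull (Finset.univ (α := Fin k))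
      (w := s) (z := fun u => ((gOne (r u), gTwo N (r u)) : ℝ × ℝ))
      (fun u _ => hs0 u) (by rw [hssum]; norm_num)
      (fun u _ => Set.mem_image_of_mem (fun ρ => ((gOne ρ, gTwo N ρ) : ℝ × ℝ)) (hrP u))
    rwa [Finset.centerMass_eq_of_sum_1 _ _ hssum] at hcm
  · rintro ⟨c, hc, hK⟩
    rw [convexHull_eq] at hK
    obtain ⟨ι, t, w, z, hw0, hw1, hz, hcm⟩ := hK
    rw [Finset.centerMass_eq_of_sum_1 _ _ hw1] at hcm
    have hz' : ∀ x : {i // i ∈ t}, ∃ ρ, ρ ∈ PMF2set A B ∧ (gOne ρ, gTwo N ρ) = z x :=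
      fun x => hz x x.2
    choose ρ hρmem hρeq using hz'
    set k := t.card with hk
    set e : Fin k ≃ {i // i ∈ t} := t.equivFin.symm with he
    set p : Fin k → A → B → ℝ := fun u a b => w (e u) * ρ (e u) a b with hp
    have hrow : ∀ x : {i // i ∈ t}, ∑ a, ∑ b, ρ x a b = 1 := fun x => (hρmem x).2
    have hIs : IsPMF3 p := by
      constructor
      · intro u a b
        exact mul_nonneg (hw0 _ (e u).2) ((hρmem (e u)).1 a b)
      · have h1 : ∀ u : Fin k, ∑ a, ∑ b, p u a b = w (e u) := by
          intro u
          rw [hp]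
          simp only
          rw [show ∑ a, ∑ b, w (e u) * ρ (e u) a b = w (e u) * ∑ a, ∑ b, ρ (e u) a b by
            rw [Finset.mul_sum]; exact Finset.sum_congr rfl fun a _ => (Finset.mul_sum _ _ _).symm]
          rw [hrow (e u), mul_one]
        rw [Finset.sum_congr rfl fun u _ => h1 u]
        rw [Equiv.sum_comp e fun x => w x]
        rw [Finset.sum_coe_sort t w]
        exact hw1
    have hd1 : condMI p = ∑ u, w (e u) * gOne (ρ (e u)) :=
      condMI_decomp p (fun u => w (e u)) (fun u => ρ (e u)) (fun u a b => rfl)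
        (fun u _ => hrow (e u))
    have hd2 : condMI (fun u (x : A × B) c => p u x.1 x.2 * N x.1 x.2 c)
        = ∑ u, w (e u) * gTwo N (ρ (e u)) :=
      condMI_chan_decomp N hN1 p (fun u => w (e u)) (fun u => ρ (e u)) (fun u a b => rfl)
        (fun u _ => hrow (e u))
    have hsum1 : ∑ u, w (e u) * gOne (ρ (e u)) = c := by
      have h1 : ∀ x : {i // i ∈ t}, w x * gOne (ρ x) = w x * (z x).1 := by
        intro x; rw [← hρeq x]
      rw [Equiv.sum_comp e fun x => w x * gOne (ρ x)]
      rw [Finset.sum_congr rfl fun x _ => h1 x]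
      have h2 : ∑ x : {i // i ∈ t}, w x * (z x).1 = (∑ i ∈ t, w i • z i).1 := by
        rw [Prod.fst_sum]
        rw [← Finset.sum_coe_sort t (fun i => (w i • z i).1)]
        exact Finset.sum_congr rfl fun x _ => by simp [smul_eq_mul]
      rw [h2, hcm]
    have hsum2 : ∑ u, w (e u) * gTwo N (ρ (e u)) = v := by
      have h1 : ∀ x : {i // i ∈ t}, w x * gTwo N (ρ x) = w x * (z x).2 := by
        intro x; rw [← hρeq x]
      rw [Equiv.sum_comp e fun x => w x * gTwo N (ρ x)]
      rw [Finset.sum_congr rfl fun x _ => h1 x]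
      have h2 : ∑ x : {i // i ∈ t}, w x * (z x).2 = (∑ i ∈ t, w i • z i).2 := by
        rw [Prod.snd_sum]
        rw [← Finset.sum_coe_sort t (fun i => (w i • z i).2)]
        exact Finset.sum_congr rfl fun x _ => by simp [smul_eq_mul]
      rw [h2, hcm]
    exact ⟨k, p, hIs, by rw [hd1, hsum1]; exact hc, by rw [hd2, hsum2]⟩

private theorem gen_continuousOn [Nonempty A] [Nonempty B]
    (N : A → B → C → ℝ) (hN1 : ∀ a b, ∑ c, N a b c = 1) :
    ContinuousOn (fun δ : ℝ => sSup {v : ℝ | ∃ (k : ℕ) (p : Fin k → A → B → ℝ),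
      IsPMF3 p ∧ condMI p ≤ δ ∧
      v = condMI (fun u (x : A × B) c => p u x.1 x.2 * N x.1 x.2 c)}) (Set.Ici 0) := by
  have hT : IsCompact ((fun ρ => ((gOne ρ, gTwo N ρ) : ℝ × ℝ)) '' PMF2set A B) :=
    pmf2_compact.image (gOne_continuous.prodMk (gTwo_continuous N))
  have hTne : ((fun ρ => ((gOne ρ, gTwo N ρ) : ℝ × ℝ)) '' PMF2set A B).Nonempty :=
    ⟨_, Set.mem_image_of_mem _ (ptMass_mem (A := A) (B := B))⟩
  have hK : IsCompact (convexHull ℝ ((fun ρ => ((gOne ρ, gTwo N ρ) : ℝ × ℝ)) '' PMF2set A B)) :=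
    isCompact_convexHull_pair hT hTne
  have hv0 : ((0 : ℝ), gTwo N (ptMass A B))
      ∈ convexHull ℝ ((fun ρ => ((gOne ρ, gTwo N ρ) : ℝ × ℝ)) '' PMF2set A B) := by
    apply subset_convexHull
    refine ⟨ptMass A B, ptMass_mem, ?_⟩
    simp [gOne_ptMass]
  have hcont := Kcont _ hK (convex_convexHull ℝ _) _ hv0
  refine hcont.congr ?_
  intro δ _
  exact congrArg sSup (sigma_set_eq N hN1 δ)

end Aux

/-- `σ₁` is continuous on `ℝ_{≥0}`; in particular it is continuous
at `δ = 0` (from within `ℝ_{≥0}`). -/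
theorem sigmaOne_continuousOn
    {X1 X2 Y : Type} [Fintype X1] [Fintype X2] [Fintype Y]
    (M : MAC X1 X2 Y) :
    ContinuousOn (fun δ : ℝ => sigmaN M 1 δ) (Set.Ici 0) := by
  rcases isEmpty_or_nonempty X1 with hX1 | hX1
  · have hempty : ∀ δ : ℝ, sigmaSet M 1 δ = ∅ := by
      intro δ
      ext v
      simp only [sigmaSet, Set.mem_setOf_eq, Set.mem_empty_iff_false, iff_false]
      rintro ⟨k, p, ⟨hp0, hp1⟩, -, -⟩
      haveI : IsEmpty (Fin 1 → X1) := ⟨fun f => hX1.false (f 0)⟩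
      rw [Finset.sum_congr rfl (fun u _ => by
        rw [Finset.univ_eq_empty (α := Fin 1 → X1), Finset.sum_empty])] at hp1
      simp at hp1
    have heq : (fun δ : ℝ => sigmaN M 1 δ) = fun _ : ℝ => (0:ℝ) := by
      funext δ
      rw [sigmaN, hempty, Real.sSup_empty]
    rw [heq]
    exact continuousOn_const
  rcases isEmpty_or_nonempty X2 with hX2 | hX2
  · have hempty : ∀ δ : ℝ, sigmaSet M 1 δ = ∅ := by
      intro δ
      ext v
      simp only [sigmaSet, Set.mem_setOf_eq, Set.mem_empty_iff_false, iff_false]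
      rintro ⟨k, p, ⟨hp0, hp1⟩, -, -⟩
      haveI : IsEmpty (Fin 1 → X2) := ⟨fun f => hX2.false (f 0)⟩
      rw [Finset.sum_congr rfl (fun u _ => Finset.sum_congr rfl (fun a _ => by
        rw [Finset.univ_eq_empty (α := Fin 1 → X2), Finset.sum_empty]))] at hp1
      simp at hp1
    have heq : (fun δ : ℝ => sigmaN M 1 δ) = fun _ : ℝ => (0:ℝ) := by
      funext δ
      rw [sigmaN, hempty, Real.sSup_empty]
    rw [heq]
    exact continuousOn_const
  · have hN1 : ∀ (a : Fin 1 → X1) (b : Fin 1 → X2),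
        ∑ y : Fin 1 → Y, ∏ t, M.W (a t) (b t) (y t) = 1 := by
      intro a b
      rw [show (Finset.univ : Finset (Fin 1 → Y)) = Fintype.piFinset fun _ => Finset.univ from
        (Fintype.piFinset_univ).symm]
      rw [← Finset.prod_univ_sum]
      simp [M.sum_one]
    have hgen := gen_continuousOn (A := Fin 1 → X1) (B := Fin 1 → X2) (C := Fin 1 → Y)
      (fun a b y => ∏ t, M.W (a t) (b t) (y t)) hN1
    refine hgen.congr ?_
    intro δ _
    unfold sigmaN
    refine congrArg sSup ?_
    ext v
    simp only [sigmaSet, Set.mem_setOf_eq, Nat.cast_one, one_mul]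
    norm_num
end

section
/- Let (𝒳₁×𝒳₂, p(y|x₁,x₂), 𝒴) be a discrete memoryless multiple access channel, 𝒰 a finite set, δ ≥ 0, and p(u,x₁,x₂) a joint pmf with I(X₁;X₂|U) ≤ δ. Define p(y|u) := ∑_{x₁,x₂} p(x₁,x₂|u) p(y|x₁,x₂) and p_ind(y|u) := ∑_{x₁,x₂} p(x₁|u)p(x₂|u) p(y|x₁,x₂). Then ∑_{u∈𝒰} p(u)·‖p(y|u) − p_ind(y|u)‖_{L¹} ≤ √(2δ ln 2). -/
open scoped BigOperators

variable {U : Type} [Fintype U]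

/-- `p(u)`, the marginal of `U` under the joint pmf `p(u,x₁,x₂)`. -/
noncomputable def margU {U X1 X2 : Type} [Fintype U] [Fintype X1] [Fintype X2]
    (p : U → X1 → X2 → ℝ) (u : U) : ℝ :=
  ∑ x1, ∑ x2, p u x1 x2

/-- `p(y|u) = ∑_{x₁,x₂} p(x₁,x₂|u) p(y|x₁,x₂)`. -/
noncomputable def outCond {U X1 X2 Y : Type} [Fintype U] [Fintype X1] [Fintype X2] [Fintype Y]
    (M : MAC X1 X2 Y) (p : U → X1 → X2 → ℝ) (u : U) (y : Y) : ℝ :=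
  ∑ x1, ∑ x2, (p u x1 x2 / margU p u) * M.W x1 x2 y

/-- `p_ind(y|u) = ∑_{x₁,x₂} p(x₁|u)p(x₂|u) p(y|x₁,x₂)`. -/
noncomputable def outCondInd {U X1 X2 Y : Type} [Fintype U] [Fintype X1] [Fintype X2] [Fintype Y]
    (M : MAC X1 X2 Y) (p : U → X1 → X2 → ℝ) (u : U) (y : Y) : ℝ :=
  ∑ x1, ∑ x2,
    ((∑ b, p u x1 b) / margU p u) * ((∑ a, p u a x2) / margU p u) * M.W x1 x2 y

section AuxPinsker
open Real Set Finset


lemma phi_mono : MonotoneOn (fun t => Real.log t - 2*(t-1)/(t+1)) (Set.Ioi (0:ℝ)) := by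
  have hd : ∀ t ∈ Set.Ioi (0:ℝ),
      HasDerivAt (fun t => Real.log t - 2*(t-1)/(t+1)) ((t-1)^2/(t*(t+1)^2)) t := by
    intro t ht
    have ht0 : (t:ℝ) ≠ 0 := ne_of_gt ht
    have ht1 : t + 1 ≠ 0 := by simp only [Set.mem_Ioi] at ht; linarith
    have h1 : HasDerivAt Real.log t⁻¹ t := Real.hasDerivAt_log ht0
    have h2 : HasDerivAt (fun t : ℝ => 2*(t-1)/(t+1))
        ((2*1*(t+1) - 2*(t-1)*1)/((t+1)^2)) t :=
      (((hasDerivAt_id t).sub_const 1).const_mul 2).div ((hasDerivAt_id t).add_const 1) ht1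
    refine (h1.sub h2).congr_deriv ?_
    have h2' : t * (t+1)^2 ≠ 0 := by positivity
    field_simp
    ring
  apply monotoneOn_of_deriv_nonneg (convex_Ioi 0)
  · exact fun t ht => (hd t ht).continuousAt.continuousWithinAt
  · rw [interior_Ioi]
    exact fun t ht => (hd t ht).differentiableAt.differentiableWithinAt
  · rw [interior_Ioi]
    intro t ht
    rw [(hd t ht).deriv]
    have : (0:ℝ) < t := ht
    positivity

lemma log_ge_aux {t : ℝ} (ht : 1 ≤ t) : 2*(t-1)/(t+1) ≤ Real.log t := by
  have := phi_mono (by norm_num : (1:ℝ) ∈ Set.Ioi 0) (by simp [Set.mem_Ioi]; linarith : t ∈ Set.Ioi 0) ht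
  simp only [Real.log_one] at this
  norm_num at this
  linarith

lemma log_le_aux {t : ℝ} (ht0 : 0 < t) (ht : t ≤ 1) : Real.log t ≤ 2*(t-1)/(t+1) := by
  have := phi_mono (Set.mem_Ioi.2 ht0) (by norm_num : (1:ℝ) ∈ Set.Ioi 0) ht
  simp only [Real.log_one] at this
  norm_num at this
  linarith


noncomputable def hfun (t : ℝ) : ℝ := t * Real.log t - t + 1 - 3*(t-1)^2/(2*(t+2))

lemma hfun_hasDeriv {t : ℝ} (ht : 0 < t) :
    HasDerivAt hfun (Real.log t - 3*(t-1)*(t+5)/(2*(t+2)^2)) t := by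
  have ht0 : t ≠ 0 := ne_of_gt ht
  have ht2 : 2*(t+2) ≠ 0 := by positivity
  have h1 : HasDerivAt (fun t : ℝ => t * Real.log t) (Real.log t + 1) t :=
    Real.hasDerivAt_mul_log ht0
  have h2 : HasDerivAt (fun t : ℝ => 3*(t-1)^2/(2*(t+2)))
      (((3*(2*(t-1)^1*1))*(2*(t+2)) - 3*(t-1)^2*(2*1))/((2*(t+2))^2)) t := by
    exact ((((hasDerivAt_id t).sub_const 1).pow 2).const_mul 3).div
      (((hasDerivAt_id t).add_const 2).const_mul 2) ht2
  have h3 := (h1.sub_const t).add_const 1 |>.sub h2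
  refine ((h1.sub (hasDerivAt_id t)).add_const 1 |>.sub h2).congr_deriv ?_
  have : (t+2) ≠ 0 := by positivity
  field_simp
  ring

lemma hfun_nonneg {t : ℝ} (ht : 0 < t) : 0 ≤ hfun t := by
  have h1 : hfun 1 = 0 := by norm_num [hfun]
  rcases le_total 1 t with h | h
  · have mono : MonotoneOn hfun (Set.Ici (1:ℝ)) := by
      apply monotoneOn_of_deriv_nonneg (convex_Ici 1)
      · exact fun s hs => (hfun_hasDeriv (by simp only [Set.mem_Ici] at hs; linarith)).continuousAt.continuousWithinAt
      · rw [interior_Ici]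
        exact fun s hs => (hfun_hasDeriv (by simp only [Set.mem_Ioi] at hs; linarith)).differentiableAt.differentiableWithinAt
      · rw [interior_Ici]
        intro s hs
        simp only [Set.mem_Ioi] at hs
        have hs0 : (0:ℝ) < s := by linarith
        rw [(hfun_hasDeriv hs0).deriv]
        have key : 2*(s-1)/(s+1) - 3*(s-1)*(s+5)/(2*(s+2)^2) = (s-1)^3/(2*(s+1)*(s+2)^2) := by
          have h1 : s + 1 ≠ 0 := by linarith
          have h2 : s + 2 ≠ 0 := by linarith
          field_simp
          ring
        have hl := log_ge_aux (le_of_lt hs)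
        have hc : (0:ℝ) ≤ (s-1)^3/(2*(s+1)*(s+2)^2) := by
          apply div_nonneg
          · nlinarith [sq_nonneg (s-1)]
          · positivity
        linarith
    have := mono (Set.mem_Ici.2 (le_refl 1)) (Set.mem_Ici.2 h) h
    linarith
  · have anti : AntitoneOn hfun (Set.Ioc (0:ℝ) 1) := by
      apply antitoneOn_of_deriv_nonpos (convex_Ioc 0 1)
      · exact fun s hs => (hfun_hasDeriv hs.1).continuousAt.continuousWithinAt
      · rw [interior_Ioc]
        exact fun s hs => (hfun_hasDeriv hs.1).differentiableAt.differentiableWithinAt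
      · rw [interior_Ioc]
        intro s hs
        obtain ⟨hs0, hs1⟩ := hs
        rw [(hfun_hasDeriv hs0).deriv]
        have key : 2*(s-1)/(s+1) - 3*(s-1)*(s+5)/(2*(s+2)^2) = (s-1)^3/(2*(s+1)*(s+2)^2) := by
          have h1 : s + 1 ≠ 0 := by linarith
          have h2 : s + 2 ≠ 0 := by linarith
          field_simp
          ring
        have hl := log_le_aux hs0 (le_of_lt hs1)
        have hc : (s-1)^3/(2*(s+1)*(s+2)^2) ≤ 0 := by
          apply div_nonpos_of_nonpos_of_nonneg
          · nlinarith [sq_nonneg (s-1)]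
          · positivity
        linarith
    have := anti (Set.mem_Ioc.2 ⟨ht, h⟩) (Set.mem_Ioc.2 ⟨by norm_num, le_refl 1⟩) h
    linarith

/-- pointwise Pinsker inequality -/
lemma pointwise_pinsker {x y : ℝ} (hx : 0 ≤ x) (hy : 0 ≤ y) (hxy : x ≠ 0 → y ≠ 0) :
    3*(x-y)^2/(2*(x+2*y)) ≤ x * Real.log (x/y) - x + y := by
  rcases eq_or_lt_of_le hx with h | hxpos
  · subst_vars
    rcases eq_or_lt_of_le hy with h | hypos
    · simp [← h]
    · have e1 : 3*((0:ℝ)-y)^2/(2*(0+2*y)) = 3*y/4 := by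
        field_simp
        ring
      rw [e1]
      simp only [zero_mul, zero_sub, neg_add_eq_sub]
      linarith
  · have hypos : 0 < y := lt_of_le_of_ne hy (Ne.symm (hxy (ne_of_gt hxpos)))
    set t := x / y with htdef
    have htpos : 0 < t := div_pos hxpos hypos
    have hxt : x = y * t := by rw [htdef]; field_simp
    have H := hfun_nonneg htpos
    unfold hfun at H
    have key1 : 3*(x-y)^2/(2*(x+2*y)) = y * (3*(t-1)^2/(2*(t+2))) := by
      rw [hxt]
      have : t + 2 ≠ 0 := by linarith
      have : y * t + 2 * y ≠ 0 := by nlinarith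
      field_simp
    have key2 : x * Real.log (x/y) - x + y = y * (t * Real.log t - t + 1) := by
      rw [← htdef, hxt]; ring
    rw [key1, key2]
    nlinarith [mul_le_mul_of_nonneg_left (by linarith : 3*(t-1)^2/(2*(t+2)) ≤ t * Real.log t - t + 1) hy]


lemma pinsker_fin {α : Type} [Fintype α] (q r : α → ℝ)
    (hq : ∀ a, 0 ≤ q a) (hr : ∀ a, 0 ≤ r a) (hqr : ∀ a, q a ≠ 0 → r a ≠ 0)
    (hq1 : ∑ a, q a = 1) (hr1 : ∑ a, r a = 1) :
    0 ≤ ∑ a, q a * Real.log (q a / r a) ∧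
    ∑ a, |q a - r a| ≤ Real.sqrt (2 * ∑ a, q a * Real.log (q a / r a)) := by
  set e : α → ℝ := fun a => (q a - r a)^2 / (q a + 2 * r a) with he
  have he_nonneg : ∀ a, 0 ≤ e a := fun a => div_nonneg (sq_nonneg _) (by have := hq a; have := hr a; linarith)
  have hge : ∀ a, (3/2) * e a ≤ q a * Real.log (q a / r a) - q a + r a := by
    intro a
    have := pointwise_pinsker (hq a) (hr a) (hqr a)
    calc (3/2) * e a = 3*(q a - r a)^2/(2*(q a + 2 * r a)) := by
          rcases eq_or_ne (q a + 2 * r a) 0 with h | h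
          · simp [he, h]
          · simp only [he]; field_simp
      _ ≤ _ := this
  have hsum_e : (3/2) * ∑ a, e a ≤ ∑ a, q a * Real.log (q a / r a) := by
    have h1 : ∑ a, (3/2) * e a ≤ ∑ a, (q a * Real.log (q a / r a) - q a + r a) :=
      Finset.sum_le_sum fun a _ => hge a
    rw [← Finset.mul_sum] at h1
    have h2 : ∑ a, (q a * Real.log (q a / r a) - q a + r a)
        = (∑ a, q a * Real.log (q a / r a)) - 1 + 1 := by
      rw [Finset.sum_add_distrib, Finset.sum_sub_distrib, hq1, hr1]
    linarith [h1, h2.le, h2.ge]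
  have he_sum_nonneg : 0 ≤ ∑ a, e a := Finset.sum_nonneg fun a _ => he_nonneg a
  constructor
  · linarith
  · -- Cauchy-Schwarz
    have habs : ∀ a, |q a - r a| = Real.sqrt (q a + 2 * r a) * Real.sqrt (e a) := by
      intro a
      rcases eq_or_lt_of_le (by have := hq a; have := hr a; linarith : (0:ℝ) ≤ q a + 2 * r a) with h | h
      · have hq0 : q a = 0 := by have := hq a; have := hr a; linarith
        have hr0 : r a = 0 := by have := hq a; have := hr a; linarith
        simp [hq0, hr0, he]
      · rw [← Real.sqrt_mul (le_of_lt h), he]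
        rw [mul_div_cancel₀ _ (ne_of_gt h)]
        exact (Real.sqrt_sq_eq_abs _).symm
    have hcs : (∑ a, |q a - r a|)^2 ≤ (∑ a, (q a + 2 * r a)) * (∑ a, e a) := by
      calc (∑ a, |q a - r a|)^2
          = (∑ a, Real.sqrt (q a + 2 * r a) * Real.sqrt (e a))^2 := by
            congr 1; exact Finset.sum_congr rfl fun a _ => habs a
        _ ≤ (∑ a, Real.sqrt (q a + 2 * r a)^2) * (∑ a, Real.sqrt (e a)^2) :=
            Finset.sum_mul_sq_le_sq_mul_sq _ _ _
        _ = (∑ a, (q a + 2 * r a)) * (∑ a, e a) := by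
            congr 1
            · exact Finset.sum_congr rfl fun a _ => Real.sq_sqrt (by have := hq a; have := hr a; linarith)
            · exact Finset.sum_congr rfl fun a _ => Real.sq_sqrt (he_nonneg a)
    have hsum3 : ∑ a, (q a + 2 * r a) = 3 := by
      rw [Finset.sum_add_distrib, ← Finset.mul_sum, hq1, hr1]; norm_num
    rw [hsum3] at hcs
    have h1 : (∑ a, |q a - r a|)^2 ≤ 2 * ∑ a, q a * Real.log (q a / r a) := by linarith
    have h2 : 0 ≤ ∑ a, |q a - r a| := Finset.sum_nonneg fun a _ => abs_nonneg _
    calc ∑ a, |q a - r a| = Real.sqrt ((∑ a, |q a - r a|)^2) := (Real.sqrt_sq h2).symm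
      _ ≤ _ := Real.sqrt_le_sqrt h1

lemma ent2_mul_log2 {α : Type} [Fintype α] (f : α → ℝ) :
    ent2 f * Real.log 2 = -∑ a, f a * Real.log (f a) := by
  have h2 : Real.log 2 ≠ 0 := ne_of_gt (Real.log_pos (by norm_num))
  unfold ent2
  rw [neg_mul, Finset.sum_mul, neg_inj]
  refine Finset.sum_congr rfl fun a _ => ?_
  rw [Real.logb]
  field_simp

lemma condMI_expand {U A B : Type} [Fintype U] [Fintype A] [Fintype B]
    (p : U → A → B → ℝ) (hpos : ∀ u a b, 0 ≤ p u a b) :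
    condMI p * Real.log 2 = ∑ u, ∑ a, ∑ b, p u a b *
      Real.log (p u a b * (∑ a', ∑ b', p u a' b') /
        ((∑ b', p u a b') * (∑ a', p u a' b))) := by
  have expand : condMI p * Real.log 2 =
      -(∑ u, ∑ a, ∑ b, p u a b * Real.log (∑ b', p u a b'))
      - (∑ u, ∑ a, ∑ b, p u a b * Real.log (∑ a', p u a' b))
      + (∑ u, ∑ a, ∑ b, p u a b * Real.log (p u a b))
      + (∑ u, ∑ a, ∑ b, p u a b * Real.log (∑ a', ∑ b', p u a' b')) := by
    have hA : (∑ ua : U × A, (∑ b, p ua.1 ua.2 b) * Real.log (∑ b, p ua.1 ua.2 b))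
        = ∑ u, ∑ a, ∑ b, p u a b * Real.log (∑ b', p u a b') := by
      rw [Fintype.sum_prod_type]
      exact Finset.sum_congr rfl fun u _ => Finset.sum_congr rfl fun a _ => Finset.sum_mul ..
    have hB : (∑ ub : U × B, (∑ a, p ub.1 a ub.2) * Real.log (∑ a, p ub.1 a ub.2))
        = ∑ u, ∑ a, ∑ b, p u a b * Real.log (∑ a', p u a' b) := by
      rw [Fintype.sum_prod_type]
      refine Finset.sum_congr rfl fun u _ => ?_
      rw [Finset.sum_comm]
      exact Finset.sum_congr rfl fun a _ => Finset.sum_mul ..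
    have hJ : (∑ uab : U × A × B, p uab.1 uab.2.1 uab.2.2 * Real.log (p uab.1 uab.2.1 uab.2.2))
        = ∑ u, ∑ a, ∑ b, p u a b * Real.log (p u a b) := by
      rw [Fintype.sum_prod_type]
      exact Finset.sum_congr rfl fun u _ => Fintype.sum_prod_type _
    have hM : (∑ u, (∑ a, ∑ b, p u a b) * Real.log (∑ a, ∑ b, p u a b))
        = ∑ u, ∑ a, ∑ b, p u a b * Real.log (∑ a', ∑ b', p u a' b') := by
      refine Finset.sum_congr rfl fun u _ => ?_
      rw [Finset.sum_mul]
      exact Finset.sum_congr rfl fun a _ => Finset.sum_mul ..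
    have e := ent2_mul_log2 (fun ua : U × A => ∑ b, p ua.1 ua.2 b)
    have e2 := ent2_mul_log2 (fun ub : U × B => ∑ a, p ub.1 a ub.2)
    have e3 := ent2_mul_log2 (fun uab : U × A × B => p uab.1 uab.2.1 uab.2.2)
    have e4 := ent2_mul_log2 (fun u : U => ∑ a, ∑ b, p u a b)
    unfold condMI
    rw [sub_mul, sub_mul, add_mul, e, e2, e3, e4, hA, hB, hJ, hM]
    ring
  rw [expand]
  have combine : ∀ u a b, p u a b * Real.log (p u a b)
      + p u a b * Real.log (∑ a', ∑ b', p u a' b')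
      - p u a b * Real.log (∑ b', p u a b')
      - p u a b * Real.log (∑ a', p u a' b)
      = p u a b * Real.log (p u a b * (∑ a', ∑ b', p u a' b') /
          ((∑ b', p u a b') * (∑ a', p u a' b))) := by
    intro u a b
    rcases eq_or_lt_of_le (hpos u a b) with h | h
    · simp [← h]
    · have hpa : 0 < ∑ b', p u a b' :=
        lt_of_lt_of_le h (Finset.single_le_sum (fun b' _ => hpos u a b') (Finset.mem_univ b))
      have hpb : 0 < ∑ a', p u a' b :=
        lt_of_lt_of_le h (Finset.single_le_sum (fun a' _ => hpos u a' b) (Finset.mem_univ a))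
      have hmm : 0 < ∑ a', ∑ b', p u a' b' :=
        lt_of_lt_of_le hpa (Finset.single_le_sum
          (fun a' (_ : a' ∈ Finset.univ) => Finset.sum_nonneg fun b' _ => hpos u a' b')
          (Finset.mem_univ a))
      rw [Real.log_div (by positivity) (by positivity),
        Real.log_mul (ne_of_gt h) (ne_of_gt hmm),
        Real.log_mul (ne_of_gt hpa) (ne_of_gt hpb)]
      ring
  calc -(∑ u, ∑ a, ∑ b, p u a b * Real.log (∑ b', p u a b'))
      - (∑ u, ∑ a, ∑ b, p u a b * Real.log (∑ a', p u a' b))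
      + (∑ u, ∑ a, ∑ b, p u a b * Real.log (p u a b))
      + (∑ u, ∑ a, ∑ b, p u a b * Real.log (∑ a', ∑ b', p u a' b'))
      = ∑ u, ∑ a, ∑ b, (p u a b * Real.log (p u a b)
          + p u a b * Real.log (∑ a', ∑ b', p u a' b')
          - p u a b * Real.log (∑ b', p u a b')
          - p u a b * Real.log (∑ a', p u a' b)) := by
        simp only [Finset.sum_add_distrib, Finset.sum_sub_distrib]
        ring
    _ = _ := Finset.sum_congr rfl fun u _ => Finset.sum_congr rfl fun a _ =>
        Finset.sum_congr rfl fun b _ => combine u a b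

end AuxPinsker

/-- If `I(X₁;X₂|U) ≤ δ` (in bits), then
`∑_u p(u)·‖p(y|u) − p_ind(y|u)‖_{L¹} ≤ √(2δ ln 2)`. -/
theorem output_L1_bound
    {U X1 X2 Y : Type} [Fintype U] [Fintype X1] [Fintype X2] [Fintype Y]
    (M : MAC X1 X2 Y) (δ : ℝ) (hδ : 0 ≤ δ)
    (p : U → X1 → X2 → ℝ) (hp : IsPMF3 p) (hMI : condMI p ≤ δ) :
    ∑ u, margU p u * (∑ y, |outCond M p u y - outCondInd M p u y|)
      ≤ Real.sqrt (2 * δ * Real.log 2) := by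
  obtain ⟨hpos, hsum⟩ := hp
  have hm_nonneg : ∀ u, 0 ≤ margU p u :=
    fun u => Finset.sum_nonneg fun a _ => Finset.sum_nonneg fun b _ => hpos u a b
  have hm_sum : ∑ u, margU p u = 1 := hsum
  set q : U → X1 × X2 → ℝ := fun u x => p u x.1 x.2 / margU p u with hq_def
  set r : U → X1 × X2 → ℝ :=
    fun u x => ((∑ b, p u x.1 b) / margU p u) * ((∑ a, p u a x.2) / margU p u) with hr_def
  set D : U → ℝ := fun u => ∑ x : X1 × X2, q u x * Real.log (q u x / r u x) with hD_def
  have hq_nonneg : ∀ u x, 0 ≤ q u x := fun u x => div_nonneg (hpos u x.1 x.2) (hm_nonneg u)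
  have hr_nonneg : ∀ u x, 0 ≤ r u x := fun u x =>
    mul_nonneg (div_nonneg (Finset.sum_nonneg fun b _ => hpos u x.1 b) (hm_nonneg u))
      (div_nonneg (Finset.sum_nonneg fun a _ => hpos u a x.2) (hm_nonneg u))
  -- zero-mass case
  have hp0 : ∀ u, margU p u = 0 → ∀ a b, p u a b = 0 := by
    intro u hu a b
    have h1 : (∑ b', p u a b') = 0 := by
      have := (Finset.sum_eq_zero_iff_of_nonneg
        (fun a' _ => Finset.sum_nonneg fun b' _ => hpos u a' b')).1 hu
      exact this a (Finset.mem_univ a)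
    exact (Finset.sum_eq_zero_iff_of_nonneg (fun b' _ => hpos u a b')).1 h1 b (Finset.mem_univ b)
  have hD0 : ∀ u, margU p u = 0 → D u = 0 := by
    intro u hu
    refine Finset.sum_eq_zero fun x _ => ?_
    simp [hq_def, hp0 u hu x.1 x.2]
  -- Pinsker per u
  have hPins : ∀ u, margU p u ≠ 0 →
      0 ≤ D u ∧ ∑ x : X1 × X2, |q u x - r u x| ≤ Real.sqrt (2 * D u) := by
    intro u hu
    have hmpos : 0 < margU p u := lt_of_le_of_ne (hm_nonneg u) (Ne.symm hu)
    refine pinsker_fin (q u) (r u) (hq_nonneg u) (hr_nonneg u) ?_ ?_ ?_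
    · intro x hx
      have hpx : p u x.1 x.2 ≠ 0 := fun h => hx (by simp [hq_def, h])
      have hppos : 0 < p u x.1 x.2 := lt_of_le_of_ne (hpos u x.1 x.2) (Ne.symm hpx)
      have hpa : 0 < ∑ b, p u x.1 b :=
        lt_of_lt_of_le hppos (Finset.single_le_sum (fun b _ => hpos u x.1 b) (Finset.mem_univ x.2))
      have hpb : 0 < ∑ a, p u a x.2 :=
        lt_of_lt_of_le hppos (Finset.single_le_sum (fun a _ => hpos u a x.2) (Finset.mem_univ x.1))
      simp only [hr_def]
      positivity
    · simp only [hq_def, Fintype.sum_prod_type, ← Finset.sum_div]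
      rw [← margU]
      exact div_self hu
    · simp only [hr_def, Fintype.sum_prod_type]
      rw [← Finset.sum_mul_sum, ← Finset.sum_div, ← Finset.sum_div]
      have e1 : ∑ x1, ∑ b, p u x1 b = margU p u := rfl
      have e2 : (∑ x2, ∑ a, p u a x2) = margU p u := Finset.sum_comm
      rw [e1, e2, div_self hu, one_mul]
  have hDnn : ∀ u, 0 ≤ D u := by
    intro u
    rcases eq_or_ne (margU p u) 0 with h | h
    · rw [hD0 u h]
    · exact (hPins u h).1
  -- total variation data processing
  have hTV : ∀ u, ∑ y, |outCond M p u y - outCondInd M p u y|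
      ≤ ∑ x : X1 × X2, |q u x - r u x| := by
    intro u
    have hdiff : ∀ y, outCond M p u y - outCondInd M p u y
        = ∑ x : X1 × X2, (q u x - r u x) * M.W x.1 x.2 y := by
      intro y
      simp only [sub_mul, Finset.sum_sub_distrib, Fintype.sum_prod_type]
      rfl
    calc ∑ y, |outCond M p u y - outCondInd M p u y|
        ≤ ∑ y, ∑ x : X1 × X2, |q u x - r u x| * M.W x.1 x.2 y := by
          refine Finset.sum_le_sum fun y _ => ?_
          rw [hdiff y]
          refine (Finset.abs_sum_le_sum_abs _ _).trans (le_of_eq ?_)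
          refine Finset.sum_congr rfl fun x _ => ?_
          rw [abs_mul, abs_of_nonneg (M.nonneg x.1 x.2 y)]
      _ = ∑ x : X1 × X2, |q u x - r u x| * ∑ y, M.W x.1 x.2 y := by
          rw [Finset.sum_comm]
          exact Finset.sum_congr rfl fun x _ => (Finset.mul_sum _ _ _).symm
      _ = ∑ x : X1 × X2, |q u x - r u x| := by
          refine Finset.sum_congr rfl fun x _ => ?_
          rw [M.sum_one, mul_one]
  -- step chain per u
  have step : ∀ u, margU p u * (∑ y, |outCond M p u y - outCondInd M p u y|)
      ≤ margU p u * Real.sqrt (2 * D u) := by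
    intro u
    rcases eq_or_ne (margU p u) 0 with h | h
    · rw [h, zero_mul, zero_mul]
    · exact mul_le_mul_of_nonneg_left ((hTV u).trans (hPins u h).2) (hm_nonneg u)
  -- key identity: sum of m * D equals condMI * log 2
  have key_id : ∑ u, margU p u * D u = condMI p * Real.log 2 := by
    rw [condMI_expand p hpos]
    refine Finset.sum_congr rfl fun u _ => ?_
    rcases eq_or_ne (margU p u) 0 with h | h
    · rw [h, zero_mul]
      symm
      refine Finset.sum_eq_zero fun a _ => Finset.sum_eq_zero fun b _ => ?_
      rw [hp0 u h a b, zero_mul]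
    · have hmpos : 0 < margU p u := lt_of_le_of_ne (hm_nonneg u) (Ne.symm h)
      rw [hD_def, Finset.mul_sum, Fintype.sum_prod_type]
      refine Finset.sum_congr rfl fun a _ => Finset.sum_congr rfl fun b _ => ?_
      simp only [hq_def, hr_def]
      rcases eq_or_lt_of_le (hpos u a b) with hpz | hppos
      · simp [← hpz]
      · have hpa : 0 < ∑ b', p u a b' :=
          lt_of_lt_of_le hppos (Finset.single_le_sum (fun b' _ => hpos u a b') (Finset.mem_univ b))
        have hpb : 0 < ∑ a', p u a' b :=
          lt_of_lt_of_le hppos (Finset.single_le_sum (fun a' _ => hpos u a' b) (Finset.mem_univ a))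
        have harg : (p u a b / margU p u) /
            ((∑ b', p u a b') / margU p u * ((∑ a', p u a' b) / margU p u))
            = p u a b * margU p u / ((∑ b', p u a b') * (∑ a', p u a' b)) := by
          field_simp
        rw [harg, show (∑ a' : X1, ∑ b' : X2, p u a' b') = margU p u from rfl]
        field_simp
  -- Cauchy-Schwarz over u
  have hcs : (∑ u, margU p u * Real.sqrt (2 * D u))^2
      ≤ (∑ u, margU p u) * (∑ u, margU p u * (2 * D u)) := by
    have hterm : ∀ u, margU p u * Real.sqrt (2 * D u)
        = Real.sqrt (margU p u) * Real.sqrt (margU p u * (2 * D u)) := by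
      intro u
      rw [Real.sqrt_mul (hm_nonneg u), ← mul_assoc, Real.mul_self_sqrt (hm_nonneg u)]
    calc (∑ u, margU p u * Real.sqrt (2 * D u))^2
        = (∑ u, Real.sqrt (margU p u) * Real.sqrt (margU p u * (2 * D u)))^2 := by
          congr 1
          exact Finset.sum_congr rfl fun u _ => hterm u
      _ ≤ (∑ u, Real.sqrt (margU p u)^2) * (∑ u, Real.sqrt (margU p u * (2 * D u))^2) :=
          Finset.sum_mul_sq_le_sq_mul_sq _ _ _
      _ = (∑ u, margU p u) * (∑ u, margU p u * (2 * D u)) := by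
          congr 1
          · exact Finset.sum_congr rfl fun u _ => Real.sq_sqrt (hm_nonneg u)
          · refine Finset.sum_congr rfl fun u _ => Real.sq_sqrt ?_
            exact mul_nonneg (hm_nonneg u) (by linarith [hDnn u])
  rw [hm_sum, one_mul] at hcs
  have h2D : ∑ u, margU p u * (2 * D u) = 2 * ∑ u, margU p u * D u := by
    rw [Finset.mul_sum]
    exact Finset.sum_congr rfl fun u _ => by ring
  have hMD : ∑ u, margU p u * D u ≤ δ * Real.log 2 := by
    rw [key_id]
    exact mul_le_mul_of_nonneg_right hMI (le_of_lt (Real.log_pos (by norm_num)))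
  have hnn : 0 ≤ ∑ u, margU p u * Real.sqrt (2 * D u) :=
    Finset.sum_nonneg fun u _ => mul_nonneg (hm_nonneg u) (Real.sqrt_nonneg _)
  calc ∑ u, margU p u * (∑ y, |outCond M p u y - outCondInd M p u y|)
      ≤ ∑ u, margU p u * Real.sqrt (2 * D u) := Finset.sum_le_sum fun u _ => step u
    _ = Real.sqrt ((∑ u, margU p u * Real.sqrt (2 * D u))^2) := (Real.sqrt_sq hnn).symm
    _ ≤ Real.sqrt (2 * δ * Real.log 2) := by
        apply Real.sqrt_le_sqrt
        rw [h2D] at hcs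
        nlinarith [hcs, hMD]
end

section
/- Let (𝒳₁×𝒳₂, p(y|x₁,x₂), 𝒴) be a discrete memoryless multiple access channel, 𝒰 a finite set, δ > 0 with √(2δ ln 2) ≤ |𝒴|/e, and p(u,x₁,x₂) a joint pmf with I(X₁;X₂|U) ≤ δ. Let Y be the channel output under p(u,x₁,x₂), and let H_ind(Y|U) denote the conditional output entropy when the input distribution given U = u is replaced by the product p(x₁|u)p(x₂|u). Then |H(Y|U) − H_ind(Y|U)| ≤ √(2δ ln 2) · log₂(|𝒴|³ / √(2δ ln 2)). -/
open scoped BigOperators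

private lemma log_lower_pade {x : ℝ} (hx : 1 ≤ x) :
    3 * (x ^ 2 - 1) / (x ^ 2 + 4 * x + 1) ≤ Real.log x := by
  set f : ℝ → ℝ := fun t => Real.log t - 3 * (t ^ 2 - 1) / (t ^ 2 + 4 * t + 1) with hf
  have hder : ∀ t ∈ Set.Ici (1:ℝ), HasDerivAt f
      (1 / t - (3 * (2 * t) * (t ^ 2 + 4 * t + 1) - 3 * (t ^ 2 - 1) * (2 * t + 4)) /
        (t ^ 2 + 4 * t + 1) ^ 2) t := by
    intro t ht
    have ht0 : (0:ℝ) < t := lt_of_lt_of_le one_pos ht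
    have hQ : t ^ 2 + 4 * t + 1 ≠ 0 := by nlinarith
    have h1 : HasDerivAt Real.log (1 / t) t := by
      simpa [one_div] using Real.hasDerivAt_log (ne_of_gt ht0)
    have h2 : HasDerivAt (fun t : ℝ => 3 * (t ^ 2 - 1)) (3 * (2 * t)) t := by
      have := ((hasDerivAt_pow 2 t).sub_const 1).const_mul (3:ℝ)
      simpa using this
    have h3 : HasDerivAt (fun t : ℝ => t ^ 2 + 4 * t + 1) (2 * t + 4) t := by
      have := ((hasDerivAt_pow 2 t).add ((hasDerivAt_id t).const_mul 4)).add_const 1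
      simpa [mul_comm] using this
    exact h1.sub (h2.div h3 hQ)
  have hmono : MonotoneOn f (Set.Ici 1) := by
    apply monotoneOn_of_deriv_nonneg (convex_Ici 1)
    · intro t ht
      exact ((hder t ht).continuousAt).continuousWithinAt
    · intro t ht
      rw [interior_Ici] at ht
      exact ((hder t (Set.mem_Ici.mpr (le_of_lt ht))).differentiableAt).differentiableWithinAt
    · intro t ht
      rw [interior_Ici] at ht
      have ht1 : (1:ℝ) < t := ht
      have ht0 : (0:ℝ) < t := lt_trans one_pos ht1
      rw [(hder t (Set.mem_Ici.mpr (le_of_lt ht1))).deriv]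
      have hQ : (0:ℝ) < t ^ 2 + 4 * t + 1 := by nlinarith
      have key : 1 / t - (3 * (2 * t) * (t ^ 2 + 4 * t + 1) - 3 * (t ^ 2 - 1) * (2 * t + 4)) /
          (t ^ 2 + 4 * t + 1) ^ 2 = (t - 1) ^ 4 / (t * (t ^ 2 + 4 * t + 1) ^ 2) := by
        field_simp
        ring
      rw [key]
      positivity
  have h1 := hmono (Set.self_mem_Ici) (Set.mem_Ici.mpr hx) hx
  simp only [hf, Real.log_one] at h1
  norm_num at h1
  linarith

private lemma log_upper_pade {y : ℝ} (hy : 1 ≤ y) :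
    Real.log y ≤ (y - 1) * (y + 5) / (2 * (2 * y + 1)) := by
  set f : ℝ → ℝ := fun t => (t - 1) * (t + 5) / (2 * (2 * t + 1)) - Real.log t with hf
  have hder : ∀ t ∈ Set.Ici (1:ℝ), HasDerivAt f
      (((t + 5) + (t - 1)) * (2 * (2 * t + 1)) / (2 * (2 * t + 1)) ^ 2 -
        ((t - 1) * (t + 5) * 4) / (2 * (2 * t + 1)) ^ 2 - 1 / t) t := by
    intro t ht
    have ht0 : (0:ℝ) < t := lt_of_lt_of_le one_pos ht
    have hQ : 2 * (2 * t + 1) ≠ 0 := by nlinarith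
    have h1 : HasDerivAt Real.log (1 / t) t := by
      simpa [one_div] using Real.hasDerivAt_log (ne_of_gt ht0)
    have h2 : HasDerivAt (fun t : ℝ => (t - 1) * (t + 5)) ((t + 5) + (t - 1)) t := by
      exact (((hasDerivAt_id t).sub_const 1).mul ((hasDerivAt_id t).add_const 5)).congr_deriv
        (by simp only [id, one_mul, mul_one])
    have h3 : HasDerivAt (fun t : ℝ => 2 * (2 * t + 1)) 4 t := by
      exact ((((hasDerivAt_id t).const_mul 2).add_const 1).const_mul (2:ℝ)).congr_deriv
        (by norm_num)
    exact ((h2.div h3 hQ).sub h1).congr_deriv (by ring)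
  have hmono : MonotoneOn f (Set.Ici 1) := by
    apply monotoneOn_of_deriv_nonneg (convex_Ici 1)
    · intro t ht
      exact ((hder t ht).continuousAt).continuousWithinAt
    · intro t ht
      rw [interior_Ici] at ht
      exact ((hder t (Set.mem_Ici.mpr (le_of_lt ht))).differentiableAt).differentiableWithinAt
    · intro t ht
      rw [interior_Ici] at ht
      have ht1 : (1:ℝ) < t := ht
      have ht0 : (0:ℝ) < t := lt_trans one_pos ht1
      rw [(hder t (Set.mem_Ici.mpr (le_of_lt ht1))).deriv]
      have hQ : (0:ℝ) < 2 * t + 1 := by nlinarith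
      have key : ((t + 5) + (t - 1)) * (2 * (2 * t + 1)) / (2 * (2 * t + 1)) ^ 2 -
          ((t - 1) * (t + 5) * 4) / (2 * (2 * t + 1)) ^ 2 - 1 / t
          = (t - 1) ^ 3 / (t * (2 * t + 1) ^ 2) := by
        field_simp
        ring
      rw [key]
      apply div_nonneg (pow_nonneg (by linarith) 3) (by positivity)
  have h1 := hmono (Set.self_mem_Ici) (Set.mem_Ici.mpr hy) hy
  simp only [hf, Real.log_one] at h1
  norm_num at h1
  linarith

private lemma kl_core {x : ℝ} (hx : 0 ≤ x) :
    3 * (x - 1) ^ 2 ≤ 2 * (x + 2) * (x * Real.log x - x + 1) := by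
  rcases eq_or_lt_of_le hx with h0 | h0
  · simp [← h0]; norm_num
  rcases le_total 1 x with hx1 | hx1
  · -- x ≥ 1
    have hQ : (0:ℝ) < x ^ 2 + 4 * x + 1 := by nlinarith
    have h := log_lower_pade hx1
    have h' : 3 * (x ^ 2 - 1) ≤ Real.log x * (x ^ 2 + 4 * x + 1) :=
      (div_le_iff₀ hQ).mp h
    nlinarith [mul_le_mul_of_nonneg_left h' (le_of_lt h0), sq_nonneg ((x-1)^2),
      mul_nonneg (mul_nonneg hx hx) hx]
  · -- 0 < x ≤ 1
    have hy1 : 1 ≤ 1 / x := by rw [le_div_iff₀ h0]; linarith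
    have h := log_upper_pade hy1
    rw [one_div, Real.log_inv] at h
    have heq : (x⁻¹ - 1) * (x⁻¹ + 5) / (2 * (2 * x⁻¹ + 1)) =
        (1 - x) * (1 + 5 * x) / (2 * (x * (2 + x))) := by
      rw [div_eq_div_iff (by positivity) (by positivity)]
      field_simp
    rw [heq] at h
    have h5 : (0:ℝ) < 2 * (x * (2 + x)) := by positivity
    have h6 : -Real.log x * (2 * (x * (2 + x))) ≤ (1 - x) * (1 + 5 * x) :=
      (le_div_iff₀ h5).mp h
    nlinarith [h6]

private lemma kl_pointwise {a b : ℝ} (ha : 0 ≤ a) (hb : 0 ≤ b) (hab : b = 0 → a = 0) :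
    3 * (a - b) ^ 2 ≤ 2 * (a + 2 * b) * (a * Real.log (a / b) - a + b) := by
  rcases eq_or_lt_of_le hb with h0 | h0
  · have ha0 : a = 0 := hab h0.symm
    simp [ha0, ← h0]
  · have hx : 0 ≤ a / b := div_nonneg ha (le_of_lt h0)
    have core := kl_core hx
    have hrw : a = b * (a / b) := by field_simp
    have key := mul_le_mul_of_nonneg_left core (sq_nonneg b)
    have hb2 : b ^ 2 * (3 * (a / b - 1) ^ 2) = 3 * (a - b) ^ 2 := by
      field_simp
    have hb3 : b ^ 2 * (2 * (a / b + 2) * (a / b * Real.log (a / b) - a / b + 1)) =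
        2 * (a + 2 * b) * (a * Real.log (a / b) - a + b) := by
      field_simp
    rw [hb2, hb3] at key
    exact key

private lemma pinsker {α : Type*} [Fintype α] (P Q : α → ℝ)
    (hP : ∀ x, 0 ≤ P x) (hQ : ∀ x, 0 ≤ Q x)
    (hP1 : ∑ x, P x = 1) (hQ1 : ∑ x, Q x = 1)
    (habs : ∀ x, Q x = 0 → P x = 0) :
    (∑ x, |P x - Q x|) ^ 2 ≤ 2 * ∑ x, P x * Real.log (P x / Q x) := by
  classical
  have hv : ∀ x, 0 ≤ P x + 2 * Q x := fun x => by nlinarith [hP x, hQ x]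
  have cs := Finset.sum_mul_sq_le_sq_mul_sq Finset.univ
    (fun x => |P x - Q x| / Real.sqrt (P x + 2 * Q x))
    (fun x => Real.sqrt (P x + 2 * Q x))
  have hfg : ∀ x : α, |P x - Q x| / Real.sqrt (P x + 2 * Q x) * Real.sqrt (P x + 2 * Q x)
      = |P x - Q x| := by
    intro x
    rcases eq_or_lt_of_le (hv x) with h | h
    · have hQ0 : Q x = 0 := by nlinarith [hP x, hQ x]
      have hP0 : P x = 0 := habs x hQ0
      simp [hP0, hQ0]
    · rw [div_mul_cancel₀]
      exact Real.sqrt_ne_zero'.mpr h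
  have hf2 : ∀ x : α, (|P x - Q x| / Real.sqrt (P x + 2 * Q x)) ^ 2
      = (P x - Q x) ^ 2 / (P x + 2 * Q x) := by
    intro x
    rcases eq_or_lt_of_le (hv x) with h | h
    · have hQ0 : Q x = 0 := by nlinarith [hP x, hQ x]
      have hP0 : P x = 0 := habs x hQ0
      simp [hP0, hQ0]
    · rw [div_pow, Real.sq_sqrt (le_of_lt h), sq_abs]
  have hg2 : ∀ x : α, (Real.sqrt (P x + 2 * Q x)) ^ 2 = P x + 2 * Q x := fun x =>
    Real.sq_sqrt (hv x)
  simp only [hfg, hf2, hg2] at cs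
  have hsum3 : ∑ x, (P x + 2 * Q x) = 3 := by
    rw [Finset.sum_add_distrib, hP1, ← Finset.mul_sum, hQ1]; norm_num
  rw [hsum3] at cs
  -- now cs : (∑ |P-Q|)^2 ≤ (∑ (P-Q)^2/(P+2Q)) * 3
  have hpt : ∀ x : α, (P x - Q x) ^ 2 / (P x + 2 * Q x) ≤
      (2/3) * (P x * Real.log (P x / Q x) - P x + Q x) := by
    intro x
    rcases eq_or_lt_of_le (hv x) with h | h
    · have hQ0 : Q x = 0 := by nlinarith [hP x, hQ x]
      have hP0 : P x = 0 := habs x hQ0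
      simp [hP0, hQ0]
    · rw [div_le_iff₀ h]
      have := kl_pointwise (hP x) (hQ x) (habs x)
      nlinarith [this]
  have hsum4 : ∑ x, (P x - Q x) ^ 2 / (P x + 2 * Q x) ≤
      (2/3) * (∑ x, P x * Real.log (P x / Q x) - 1 + 1) := by
    calc ∑ x, (P x - Q x) ^ 2 / (P x + 2 * Q x)
        ≤ ∑ x, (2/3) * (P x * Real.log (P x / Q x) - P x + Q x) :=
          Finset.sum_le_sum (fun x _ => hpt x)
      _ = (2/3) * (∑ x, P x * Real.log (P x / Q x) - 1 + 1) := by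
          rw [← Finset.mul_sum]
          congr 1
          rw [Finset.sum_add_distrib, Finset.sum_sub_distrib, hP1, hQ1]
  nlinarith [cs, hsum4]


private lemma ent_pt_aux {x y : ℝ} (hx : 0 ≤ x) (hy1 : y ≤ 1) (hxy : x ≤ y) :
    x * Real.log x - y * Real.log y ≤ -((y - x) * Real.log (y - x)) ∧
    y * Real.log y - x * Real.log x ≤ y - x := by
  rcases eq_or_lt_of_le hxy with rfl | hlt
  · simp
  have hd : 0 < y - x := by linarith
  have hy0 : 0 < y := lt_of_le_of_lt hx hlt
  constructor
  · -- x log x - y log y ≤ -(d log d)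
    have h1 : x * Real.log x - x * Real.log y ≤ 0 := by
      rcases eq_or_lt_of_le hx with rfl | hx0
      · simp
      · have : Real.log x ≤ Real.log y := Real.log_le_log hx0 (le_of_lt hlt)
        nlinarith
    have h2 : Real.log (y - x) ≤ Real.log y := Real.log_le_log hd (by linarith)
    nlinarith
  · -- y log y - x log x ≤ d
    rcases eq_or_lt_of_le hx with rfl | hx0
    · have : Real.log y ≤ 0 := Real.log_nonpos (le_of_lt hy0) hy1
      simp only [zero_mul, sub_zero]
      nlinarith
    · have h1 : Real.log y - Real.log x = Real.log (y / x) := (Real.log_div (ne_of_gt hy0) (ne_of_gt hx0)).symm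
      have h2 : Real.log (y / x) ≤ y / x - 1 := Real.log_le_sub_one_of_pos (by positivity)
      have h3 : x * Real.log y - x * Real.log x ≤ y - x := by
        have := mul_le_mul_of_nonneg_left h2 hx
        rw [← h1] at this
        have hyx : x * (y / x - 1) = y - x := by field_simp
        nlinarith
      have h4 : (y - x) * Real.log y ≤ 0 :=
        mul_nonpos_of_nonneg_of_nonpos (le_of_lt hd) (Real.log_nonpos (le_of_lt hy0) hy1)
      nlinarith

private lemma ent_pt {x y : ℝ} (hx : 0 ≤ x) (hx1 : x ≤ 1) (hy : 0 ≤ y) (hy1 : y ≤ 1) :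
    |x * Real.log x - y * Real.log y| ≤ -(|x - y| * Real.log |x - y|) + |x - y| := by
  have main : ∀ a b : ℝ, 0 ≤ a → a ≤ 1 → 0 ≤ b → b ≤ 1 → a ≤ b →
      |a * Real.log a - b * Real.log b| ≤ -(|a - b| * Real.log |a - b|) + |a - b| := by
    intro a b ha ha1 hb hb1 hab
    have habs : |a - b| = b - a := by rw [abs_sub_comm]; exact abs_of_nonneg (by linarith)
    rw [habs]
    obtain ⟨h1, h2⟩ := ent_pt_aux ha hb1 hab
    have hd0 : 0 ≤ b - a := by linarith
    have hlog : Real.log (b - a) ≤ 0 := Real.log_nonpos hd0 (by linarith)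
    have hnn : 0 ≤ -((b - a) * Real.log (b - a)) := by nlinarith
    rw [abs_le]
    constructor <;> nlinarith
  rcases le_total x y with h | h
  · exact main x y hx hx1 hy hy1 h
  · have := main y x hy hy1 hx hx1 h
    rw [abs_sub_comm (y * Real.log y), abs_sub_comm y x] at this
    exact this

private lemma sum_neg_log_le {Y : Type*} [Fintype Y] (d : Y → ℝ) (hd : ∀ y, 0 ≤ d y) :
    ∑ y, (-(d y * Real.log (d y)) + d y) ≤
      (∑ y, d y) * Real.log (Fintype.card Y) - (∑ y, d y) * Real.log (∑ y, d y) + ∑ y, d y := by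
  classical
  set t := ∑ y, d y with ht
  have ht0 : 0 ≤ t := Finset.sum_nonneg (fun y _ => hd y)
  rcases eq_or_lt_of_le ht0 with h0 | h0
  · -- t = 0 : all d y = 0
    have hall : ∀ y, d y = 0 := fun y =>
      (Finset.sum_eq_zero_iff_of_nonneg (fun y _ => hd y)).mp h0.symm y (Finset.mem_univ y)
    have hz : ∀ y ∈ Finset.univ, (-(d y * Real.log (d y)) + d y) = (0:ℝ) := fun y _ => by
      rw [hall y]; simp
    rw [Finset.sum_congr rfl hz, Finset.sum_const_zero, ← h0]
    simp
  · have hcard : 0 < (Fintype.card Y : ℝ) := by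
      have : Nonempty Y := by
        by_contra h
        rw [not_nonempty_iff] at h
        have : t = 0 := by rw [ht]; exact Finset.sum_of_isEmpty _
        linarith
      exact_mod_cast Fintype.card_pos
    have hpt : ∀ y : Y, -(d y * Real.log (d y)) + d y ≤
        d y * Real.log (Fintype.card Y) - d y * Real.log t + t / Fintype.card Y := by
      intro y
      rcases eq_or_lt_of_le (hd y) with h | h
      · rw [← h]; simp; positivity
      · have hlog : Real.log (t / ((Fintype.card Y) * d y)) ≤ t / ((Fintype.card Y) * d y) - 1 :=
          Real.log_le_sub_one_of_pos (by positivity)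
        have hexp : Real.log (t / ((Fintype.card Y) * d y)) =
            Real.log t - Real.log (Fintype.card Y) - Real.log (d y) := by
          rw [Real.log_div (ne_of_gt h0) (by positivity),
            Real.log_mul (ne_of_gt hcard) (ne_of_gt h)]
          ring
        have hm := mul_le_mul_of_nonneg_left hlog (le_of_lt h)
        rw [hexp] at hm
        have heq : d y * (t / ((Fintype.card Y) * d y) - 1) = t / Fintype.card Y - d y := by
          field_simp
        rw [heq] at hm
        linarith
    calc ∑ y, (-(d y * Real.log (d y)) + d y)
        ≤ ∑ y, (d y * Real.log (Fintype.card Y) - d y * Real.log t + t / Fintype.card Y) :=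
          Finset.sum_le_sum (fun y _ => hpt y)
      _ = t * Real.log (Fintype.card Y) - t * Real.log t
            + (Fintype.card Y : ℝ) * (t / Fintype.card Y) := by
          rw [Finset.sum_add_distrib, Finset.sum_sub_distrib, ← Finset.sum_mul, ← Finset.sum_mul,
            ← ht, Finset.sum_const, Finset.card_univ, nsmul_eq_mul]
      _ = t * Real.log (Fintype.card Y) - t * Real.log t + t := by
          rw [mul_div_cancel₀ _ (ne_of_gt hcard)]

private lemma tangent_log {t s : ℝ} (ht : 0 ≤ t) (hs : 0 < s) :
    -(t * Real.log t) ≤ -(t * Real.log s) - t + s := by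
  rcases eq_or_lt_of_le ht with h | h
  · rw [← h]; simp; linarith
  · have h1 : Real.log (s / t) ≤ s / t - 1 := Real.log_le_sub_one_of_pos (by positivity)
    have h2 : Real.log (s / t) = Real.log s - Real.log t := Real.log_div (ne_of_gt hs) (ne_of_gt h)
    have := mul_le_mul_of_nonneg_left h1 (le_of_lt h)
    rw [h2] at this
    have heq : t * (s / t - 1) = s - t := by field_simp
    nlinarith

/-- `H(Y|U) = −∑_u p(u) ∑_y p(y|u) log₂ p(y|u)` for a conditional output pmf `q(y|u)`. -/
noncomputable def condOutEnt {U X1 X2 Y : Type} [Fintype U] [Fintype X1] [Fintype X2] [Fintype Y]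
    (p : U → X1 → X2 → ℝ) (q : U → Y → ℝ) : ℝ :=
  -∑ u, margU p u * ∑ y, q u y * Real.logb 2 (q u y)


section AuxMAC

private lemma log2_mul_ent2 {α : Type} [Fintype α] (f : α → ℝ) :
    Real.log 2 * ent2 f = -∑ x, f x * Real.log (f x) := by
  have h2 : Real.log 2 ≠ 0 := ne_of_gt (Real.log_pos one_lt_two)
  simp only [ent2, Real.logb, mul_neg, neg_inj, Finset.mul_sum]
  refine Finset.sum_congr rfl fun x _ => ?_
  field_simp

private lemma sum_swap3 {α β γ : Type*} [Fintype α] [Fintype β] [Fintype γ]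
    (f : α → β → γ → ℝ) :
    ∑ y : α, ∑ a : β, ∑ b : γ, f y a b = ∑ a : β, ∑ b : γ, ∑ y : α, f y a b := by
  rw [Finset.sum_comm]
  exact Finset.sum_congr rfl fun a _ => Finset.sum_comm

variable {U X1 X2 Y : Type} [Fintype U] [Fintype X1] [Fintype X2] [Fintype Y]

private lemma margU_nonneg (p : U → X1 → X2 → ℝ) (hpn : ∀ u a b, 0 ≤ p u a b) (u : U) :
    0 ≤ margU p u :=
  Finset.sum_nonneg fun a _ => Finset.sum_nonneg fun b _ => hpn u a b

private lemma pA_le_margU (p : U → X1 → X2 → ℝ) (hpn : ∀ u a b, 0 ≤ p u a b) (u : U) (a : X1) :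
    (∑ b, p u a b) ≤ margU p u :=
  Finset.single_le_sum (f := fun a => ∑ b, p u a b)
    (fun a _ => Finset.sum_nonneg fun b _ => hpn u a b) (Finset.mem_univ a)

private lemma margU_eq_sumB (p : U → X1 → X2 → ℝ) (u : U) :
    margU p u = ∑ b, ∑ a, p u a b := Finset.sum_comm

private lemma pB_le_margU (p : U → X1 → X2 → ℝ) (hpn : ∀ u a b, 0 ≤ p u a b) (u : U) (b : X2) :
    (∑ a, p u a b) ≤ margU p u := by
  rw [margU_eq_sumB]
  exact Finset.single_le_sum (f := fun b => ∑ a, p u a b)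
    (fun b _ => Finset.sum_nonneg fun a _ => hpn u a b) (Finset.mem_univ b)

private lemma margU_zero (p : U → X1 → X2 → ℝ) (hpn : ∀ u a b, 0 ≤ p u a b) (u : U)
    (hu : margU p u = 0) (a : X1) (b : X2) : p u a b = 0 := by
  have h1 : (∑ b, p u a b) = 0 :=
    le_antisymm (hu ▸ pA_le_margU p hpn u a) (Finset.sum_nonneg fun b _ => hpn u a b)
  exact le_antisymm (h1 ▸ Finset.single_le_sum (fun b _ => hpn u a b) (Finset.mem_univ b))
    (hpn u a b)

variable (M : MAC X1 X2 Y)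

private lemma outCond_nonneg (p : U → X1 → X2 → ℝ) (hpn : ∀ u a b, 0 ≤ p u a b) (u : U) (y : Y) :
    0 ≤ outCond M p u y :=
  Finset.sum_nonneg fun a _ => Finset.sum_nonneg fun b _ =>
    mul_nonneg (div_nonneg (hpn u a b) (margU_nonneg p hpn u)) (M.nonneg a b y)

private lemma outCondInd_nonneg (p : U → X1 → X2 → ℝ) (hpn : ∀ u a b, 0 ≤ p u a b)
    (u : U) (y : Y) : 0 ≤ outCondInd M p u y :=
  Finset.sum_nonneg fun a _ => Finset.sum_nonneg fun b _ =>
    mul_nonneg (mul_nonneg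
      (div_nonneg (Finset.sum_nonneg fun b' _ => hpn u a b') (margU_nonneg p hpn u))
      (div_nonneg (Finset.sum_nonneg fun a' _ => hpn u a' b) (margU_nonneg p hpn u)))
      (M.nonneg a b y)

private lemma outCond_sum (p : U → X1 → X2 → ℝ) (u : U) (hu : margU p u ≠ 0) :
    ∑ y, outCond M p u y = 1 := by
  calc ∑ y, outCond M p u y
      = ∑ a, ∑ b, ∑ y, (p u a b / margU p u) * M.W a b y :=
        sum_swap3 (fun y a b => (p u a b / margU p u) * M.W a b y)
    _ = ∑ a, ∑ b, p u a b / margU p u := by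
        refine Finset.sum_congr rfl fun a _ => Finset.sum_congr rfl fun b _ => ?_
        rw [← Finset.mul_sum, M.sum_one, mul_one]
    _ = 1 := by
        simp only [← Finset.sum_div]
        exact div_self hu

private lemma outCondInd_sum (p : U → X1 → X2 → ℝ) (u : U) (hu : margU p u ≠ 0) :
    ∑ y, outCondInd M p u y = 1 := by
  calc ∑ y, outCondInd M p u y
      = ∑ a, ∑ b, ∑ y, ((∑ b', p u a b') / margU p u) * ((∑ a', p u a' b) / margU p u)
          * M.W a b y :=
        sum_swap3 (fun y a b => ((∑ b', p u a b') / margU p u) * ((∑ a', p u a' b) / margU p u)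
          * M.W a b y)
    _ = ∑ a, ∑ b, ((∑ b', p u a b') / margU p u) * ((∑ a', p u a' b) / margU p u) := by
        refine Finset.sum_congr rfl fun a _ => Finset.sum_congr rfl fun b _ => ?_
        rw [← Finset.mul_sum, M.sum_one, mul_one]
    _ = (∑ a, (∑ b', p u a b') / margU p u) * (∑ b, (∑ a', p u a' b) / margU p u) :=
        (Finset.sum_mul_sum _ _ _ _).symm
    _ = 1 := by
        simp only [← Finset.sum_div]
        rw [← margU_eq_sumB]
        rw [show (∑ a, ∑ b', p u a b') = margU p u from rfl, div_self hu, one_mul]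

private lemma outCond_zero (p : U → X1 → X2 → ℝ) (hpn : ∀ u a b, 0 ≤ p u a b) (u : U)
    (hu : margU p u = 0) (y : Y) : outCond M p u y = 0 :=
  Finset.sum_eq_zero fun a _ => Finset.sum_eq_zero fun b _ => by
    rw [margU_zero p hpn u hu a b, zero_div, zero_mul]

private lemma outCondInd_zero (p : U → X1 → X2 → ℝ) (hpn : ∀ u a b, 0 ≤ p u a b) (u : U)
    (hu : margU p u = 0) (y : Y) : outCondInd M p u y = 0 :=
  Finset.sum_eq_zero fun a _ => Finset.sum_eq_zero fun b _ => by
    have h1 : (∑ b', p u a b') = 0 := Finset.sum_eq_zero fun b' _ => margU_zero p hpn u hu a b'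
    rw [h1, zero_div, zero_mul, zero_mul]

private lemma outCond_le_one (p : U → X1 → X2 → ℝ) (hpn : ∀ u a b, 0 ≤ p u a b) (u : U) (y : Y) :
    outCond M p u y ≤ 1 := by
  by_cases hu : margU p u = 0
  · rw [outCond_zero M p hpn u hu y]; norm_num
  · rw [← outCond_sum M p u hu]
    exact Finset.single_le_sum (fun y _ => outCond_nonneg M p hpn u y) (Finset.mem_univ y)

private lemma outCondInd_le_one (p : U → X1 → X2 → ℝ) (hpn : ∀ u a b, 0 ≤ p u a b)
    (u : U) (y : Y) : outCondInd M p u y ≤ 1 := by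
  by_cases hu : margU p u = 0
  · rw [outCondInd_zero M p hpn u hu y]; norm_num
  · rw [← outCondInd_sum M p u hu]
    exact Finset.single_le_sum (fun y _ => outCondInd_nonneg M p hpn u y) (Finset.mem_univ y)

private lemma tv_channel (p : U → X1 → X2 → ℝ) (u : U) :
    ∑ y, |outCond M p u y - outCondInd M p u y| ≤
      ∑ a, ∑ b, |p u a b / margU p u -
        (∑ b', p u a b') / margU p u * ((∑ a', p u a' b) / margU p u)| := by
  have hdiff : ∀ y : Y, outCond M p u y - outCondInd M p u y =
      ∑ a, ∑ b, (p u a b / margU p u -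
        (∑ b', p u a b') / margU p u * ((∑ a', p u a' b) / margU p u)) * M.W a b y := by
    intro y
    rw [outCond, outCondInd, ← Finset.sum_sub_distrib]
    refine Finset.sum_congr rfl fun a _ => ?_
    rw [← Finset.sum_sub_distrib]
    exact Finset.sum_congr rfl fun b _ => by rw [sub_mul]
  calc ∑ y, |outCond M p u y - outCondInd M p u y|
      ≤ ∑ y, ∑ a, ∑ b, |p u a b / margU p u -
          (∑ b', p u a b') / margU p u * ((∑ a', p u a' b) / margU p u)| * M.W a b y := by
        refine Finset.sum_le_sum fun y _ => ?_
        rw [hdiff y]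
        refine le_trans (Finset.abs_sum_le_sum_abs _ _) (Finset.sum_le_sum fun a _ => ?_)
        refine le_trans (Finset.abs_sum_le_sum_abs _ _) (Finset.sum_le_sum fun b _ => ?_)
        rw [abs_mul, abs_of_nonneg (M.nonneg a b y)]
    _ = ∑ a, ∑ b, ∑ y, |p u a b / margU p u -
          (∑ b', p u a b') / margU p u * ((∑ a', p u a' b) / margU p u)| * M.W a b y :=
        sum_swap3 _
    _ = ∑ a, ∑ b, |p u a b / margU p u -
          (∑ b', p u a b') / margU p u * ((∑ a', p u a' b) / margU p u)| := by
        refine Finset.sum_congr rfl fun a _ => Finset.sum_congr rfl fun b _ => ?_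
        rw [← Finset.mul_sum, M.sum_one, mul_one]

private lemma pinsker_u (p : U → X1 → X2 → ℝ) (hpn : ∀ u a b, 0 ≤ p u a b) (u : U)
    (hu : margU p u ≠ 0) :
    (∑ a, ∑ b, |p u a b / margU p u -
        (∑ b', p u a b') / margU p u * ((∑ a', p u a' b) / margU p u)|) ^ 2 ≤
      2 * ∑ a, ∑ b, (p u a b / margU p u) * Real.log ((p u a b / margU p u) /
        ((∑ b', p u a b') / margU p u * ((∑ a', p u a' b) / margU p u))) := by
  have hm0 : 0 ≤ margU p u := margU_nonneg p hpn u
  have habs : ∀ x : X1 × X2,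
      (∑ b', p u x.1 b') / margU p u * ((∑ a', p u a' x.2) / margU p u) = 0 →
      p u x.1 x.2 / margU p u = 0 := by
    rintro ⟨a, b⟩ h
    dsimp only at h ⊢
    rcases mul_eq_zero.mp h with h1 | h1
    · rcases div_eq_zero_iff.mp h1 with h2 | h2
      · have h3 : p u a b ≤ ∑ b', p u a b' :=
          Finset.single_le_sum (fun b' _ => hpn u a b') (Finset.mem_univ b)
        rw [h2] at h3
        rw [le_antisymm h3 (hpn u a b), zero_div]
      · exact absurd h2 hu
    · rcases div_eq_zero_iff.mp h1 with h2 | h2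
      · have h3 : p u a b ≤ ∑ a', p u a' b :=
          Finset.single_le_sum (fun a' _ => hpn u a' b) (Finset.mem_univ a)
        rw [h2] at h3
        rw [le_antisymm h3 (hpn u a b), zero_div]
      · exact absurd h2 hu
  have hres := pinsker (fun x : X1 × X2 => p u x.1 x.2 / margU p u)
    (fun x : X1 × X2 => (∑ b', p u x.1 b') / margU p u * ((∑ a', p u a' x.2) / margU p u))
    (fun x => div_nonneg (hpn u x.1 x.2) hm0)
    (fun x => mul_nonneg (div_nonneg (Finset.sum_nonneg fun b' _ => hpn u x.1 b') hm0)
      (div_nonneg (Finset.sum_nonneg fun a' _ => hpn u a' x.2) hm0))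
    (by
      rw [Fintype.sum_prod_type]
      simp only [← Finset.sum_div]
      exact div_self hu)
    (by
      rw [Fintype.sum_prod_type]
      rw [show ∑ a : X1, ∑ b : X2, (∑ b', p u a b') / margU p u * ((∑ a', p u a' b) / margU p u)
          = (∑ a : X1, (∑ b', p u a b') / margU p u) * (∑ b : X2, (∑ a', p u a' b) / margU p u)
          from (Finset.sum_mul_sum _ _ _ _).symm]
      simp only [← Finset.sum_div]
      rw [← margU_eq_sumB]
      rw [show (∑ a, ∑ b', p u a b') = margU p u from rfl, div_self hu, one_mul])
    habs
  rw [Fintype.sum_prod_type, Fintype.sum_prod_type] at hres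
  exact hres

private lemma mi_identity (p : U → X1 → X2 → ℝ) (hpn : ∀ u a b, 0 ≤ p u a b) :
    ∑ u, margU p u * (∑ a, ∑ b, (p u a b / margU p u) * Real.log ((p u a b / margU p u) /
        ((∑ b', p u a b') / margU p u * ((∑ a', p u a' b) / margU p u)))) =
      Real.log 2 * condMI p := by
  have key : ∀ u : U, margU p u * (∑ a, ∑ b, (p u a b / margU p u) *
      Real.log ((p u a b / margU p u) /
        ((∑ b', p u a b') / margU p u * ((∑ a', p u a' b) / margU p u)))) =
      ∑ a, ∑ b, (p u a b * Real.log (p u a b) + p u a b * Real.log (margU p u)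
        - p u a b * Real.log (∑ b', p u a b') - p u a b * Real.log (∑ a', p u a' b)) := by
    intro u
    rw [Finset.mul_sum]
    refine Finset.sum_congr rfl fun a _ => ?_
    rw [Finset.mul_sum]
    refine Finset.sum_congr rfl fun b _ => ?_
    by_cases hp0 : p u a b = 0
    · simp [hp0]
    · have hp0' : 0 < p u a b := (hpn u a b).lt_of_ne (Ne.symm hp0)
      have hpa : 0 < ∑ b', p u a b' :=
        lt_of_lt_of_le hp0' (Finset.single_le_sum (fun b' _ => hpn u a b') (Finset.mem_univ b))
      have hpb : 0 < ∑ a', p u a' b :=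
        lt_of_lt_of_le hp0' (Finset.single_le_sum (fun a' _ => hpn u a' b) (Finset.mem_univ a))
      have hum : 0 < margU p u := lt_of_lt_of_le hpa (pA_le_margU p hpn u a)
      have hR : (p u a b / margU p u) /
          ((∑ b', p u a b') / margU p u * ((∑ a', p u a' b) / margU p u))
          = p u a b * margU p u / ((∑ b', p u a b') * (∑ a', p u a' b)) := by
        field_simp
      rw [hR, Real.log_div (by positivity) (by positivity),
        Real.log_mul (ne_of_gt hp0') (ne_of_gt hum), Real.log_mul (ne_of_gt hpa) (ne_of_gt hpb)]
      field_simp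
      ring
  rw [Finset.sum_congr rfl (fun u _ => key u)]
  rw [condMI, mul_sub, mul_sub, mul_add]
  simp only [log2_mul_ent2]
  have hA1 : ∑ x : U × X1, ((∑ b, p x.1 x.2 b) * Real.log (∑ b, p x.1 x.2 b))
      = ∑ u, ∑ a, ∑ b, p u a b * Real.log (∑ b', p u a b') := by
    rw [Fintype.sum_prod_type]
    exact Finset.sum_congr rfl fun u _ => Finset.sum_congr rfl fun a _ => Finset.sum_mul _ _ _
  have hA2 : ∑ x : U × X2, ((∑ a, p x.1 a x.2) * Real.log (∑ a, p x.1 a x.2))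
      = ∑ u, ∑ a, ∑ b, p u a b * Real.log (∑ a', p u a' b) := by
    rw [Fintype.sum_prod_type]
    refine Finset.sum_congr rfl fun u _ => ?_
    calc ∑ b, ((∑ a, p u a b) * Real.log (∑ a, p u a b))
        = ∑ b, ∑ a, p u a b * Real.log (∑ a', p u a' b) :=
          Finset.sum_congr rfl fun b _ => Finset.sum_mul _ _ _
      _ = ∑ a, ∑ b, p u a b * Real.log (∑ a', p u a' b) := Finset.sum_comm
  have hA3 : ∑ x : U × X1 × X2, (p x.1 x.2.1 x.2.2 * Real.log (p x.1 x.2.1 x.2.2))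
      = ∑ u, ∑ a, ∑ b, p u a b * Real.log (p u a b) := by
    rw [Fintype.sum_prod_type]
    exact Finset.sum_congr rfl fun u _ => Fintype.sum_prod_type _
  have hA4 : ∑ u, ((∑ a, ∑ b, p u a b) * Real.log (∑ a, ∑ b, p u a b))
      = ∑ u, ∑ a, ∑ b, p u a b * Real.log (margU p u) := by
    refine Finset.sum_congr rfl fun u _ => ?_
    calc (∑ a, ∑ b, p u a b) * Real.log (∑ a, ∑ b, p u a b)
        = ∑ a, ((∑ b, p u a b) * Real.log (margU p u)) := Finset.sum_mul _ _ _
      _ = ∑ a, ∑ b, p u a b * Real.log (margU p u) :=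
          Finset.sum_congr rfl fun a _ => Finset.sum_mul _ _ _
  rw [hA1, hA2, hA3, hA4]
  simp only [Finset.sum_add_distrib, Finset.sum_sub_distrib]
  ring

private lemma ent_diff_bound {Y : Type} [Fintype Y] (q q' : Y → ℝ) (s : ℝ) (hs : 0 < s)
    (hq0 : ∀ y, 0 ≤ q y) (hq1 : ∀ y, q y ≤ 1) (hq'0 : ∀ y, 0 ≤ q' y) (hq'1 : ∀ y, q' y ≤ 1) :
    |(∑ y, q y * Real.log (q y)) - ∑ y, q' y * Real.log (q' y)| ≤
      (∑ y, |q y - q' y|) * (Real.log (Fintype.card Y) - Real.log s) + s := by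
  have h1 : |(∑ y, q y * Real.log (q y)) - ∑ y, q' y * Real.log (q' y)|
      ≤ ∑ y, |q y * Real.log (q y) - q' y * Real.log (q' y)| := by
    rw [← Finset.sum_sub_distrib]
    exact Finset.abs_sum_le_sum_abs _ _
  have h2 : ∑ y, |q y * Real.log (q y) - q' y * Real.log (q' y)|
      ≤ ∑ y, (-(|q y - q' y| * Real.log |q y - q' y|) + |q y - q' y|) :=
    Finset.sum_le_sum fun y _ => ent_pt (hq0 y) (hq1 y) (hq'0 y) (hq'1 y)
  have h3 := sum_neg_log_le (fun y => |q y - q' y|) (fun y => abs_nonneg _)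
  have h4 := tangent_log (t := ∑ y, |q y - q' y|)
    (Finset.sum_nonneg fun y _ => abs_nonneg _) hs
  nlinarith [h1, h2, h3, h4]

end AuxMAC

/-- If `I(X₁;X₂|U) ≤ δ` (in bits), `δ > 0`, and `√(2δ ln 2) ≤ |𝒴|/e`,
then `|H(Y|U) − H_ind(Y|U)| ≤ √(2δ ln 2) · log₂(|𝒴|³/√(2δ ln 2))`. -/
theorem condOutputEntropy_diff_bound
    {U X1 X2 Y : Type} [Fintype U] [Fintype X1] [Fintype X2] [Fintype Y]
    (M : MAC X1 X2 Y) (δ : ℝ) (hδ : 0 < δ)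
    (hsmall : Real.sqrt (2 * δ * Real.log 2) ≤ (Fintype.card Y : ℝ) / Real.exp 1)
    (p : U → X1 → X2 → ℝ) (hp : IsPMF3 p) (hMI : condMI p ≤ δ) :
    |condOutEnt p (outCond M p) - condOutEnt p (outCondInd M p)| ≤
      Real.sqrt (2 * δ * Real.log 2) *
        Real.logb 2 ((Fintype.card Y : ℝ) ^ 3 / Real.sqrt (2 * δ * Real.log 2)) := by
  classical
  obtain ⟨hpn, hps⟩ := hp
  have hL0 : (0:ℝ) < Real.log 2 := Real.log_pos one_lt_two
  have hs0 : 0 < Real.sqrt (2 * δ * Real.log 2) := Real.sqrt_pos.mpr (by positivity)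
  have hs2 : Real.sqrt (2 * δ * Real.log 2) ^ 2 = 2 * δ * Real.log 2 :=
    Real.sq_sqrt (by positivity)
  have hexp1 : (0:ℝ) < Real.exp 1 := Real.exp_pos 1
  have hm0 : (0:ℝ) < (Fintype.card Y : ℝ) := by
    have h1 : 0 < (Fintype.card Y : ℝ) / Real.exp 1 := lt_of_lt_of_le hs0 hsmall
    have h2 := mul_pos h1 hexp1
    rwa [div_mul_cancel₀ _ (ne_of_gt hexp1)] at h2
  have hsm : Real.sqrt (2 * δ * Real.log 2) ≤ (Fintype.card Y : ℝ) :=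
    le_trans hsmall (div_le_self (le_of_lt hm0) (Real.one_le_exp zero_le_one))
  have hpU0 : ∀ u, 0 ≤ margU p u := margU_nonneg p hpn
  have hpUsum : ∑ u, margU p u = 1 := hps
  -- total variation per u and its sum
  have ht0 : ∀ u : U, 0 ≤ ∑ y, |outCond M p u y - outCondInd M p u y| :=
    fun u => Finset.sum_nonneg fun y _ => abs_nonneg _
  have hT0 : 0 ≤ ∑ u, margU p u * ∑ y, |outCond M p u y - outCondInd M p u y| :=
    Finset.sum_nonneg fun u _ => mul_nonneg (hpU0 u) (ht0 u)
  -- T ≤ s (Pinsker + Cauchy-Schwarz + MI identity)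
  have hTs : (∑ u, margU p u * ∑ y, |outCond M p u y - outCondInd M p u y|)
      ≤ Real.sqrt (2 * δ * Real.log 2) := by
    have cs := Finset.sum_mul_sq_le_sq_mul_sq Finset.univ
      (fun u => Real.sqrt (margU p u))
      (fun u => Real.sqrt (margU p u) * ∑ y, |outCond M p u y - outCondInd M p u y|)
    have e1 : ∀ u : U, Real.sqrt (margU p u) *
        (Real.sqrt (margU p u) * ∑ y, |outCond M p u y - outCondInd M p u y|)
        = margU p u * ∑ y, |outCond M p u y - outCondInd M p u y| := fun u => by
      rw [← mul_assoc, Real.mul_self_sqrt (hpU0 u)]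
    have e2 : ∀ u : U, Real.sqrt (margU p u) ^ 2 = margU p u := fun u => Real.sq_sqrt (hpU0 u)
    have e3 : ∀ u : U, (Real.sqrt (margU p u) * ∑ y, |outCond M p u y - outCondInd M p u y|) ^ 2
        = margU p u * (∑ y, |outCond M p u y - outCondInd M p u y|) ^ 2 := fun u => by
      rw [mul_pow, Real.sq_sqrt (hpU0 u)]
    simp only [e1, e2, e3] at cs
    rw [hpUsum, one_mul] at cs
    have bound : ∀ u : U, margU p u * (∑ y, |outCond M p u y - outCondInd M p u y|) ^ 2
        ≤ 2 * (margU p u * (∑ a, ∑ b, (p u a b / margU p u) *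
            Real.log ((p u a b / margU p u) /
              ((∑ b', p u a b') / margU p u * ((∑ a', p u a' b) / margU p u))))) := by
      intro u
      by_cases hu : margU p u = 0
      · rw [hu]; simp
      · have h1 := tv_channel M p u
        have h2 := pinsker_u p hpn u hu
        have h3 : (∑ y, |outCond M p u y - outCondInd M p u y|) ^ 2
            ≤ (∑ a, ∑ b, |p u a b / margU p u -
              (∑ b', p u a b') / margU p u * ((∑ a', p u a' b) / margU p u)|) ^ 2 :=
          pow_le_pow_left₀ (ht0 u) h1 2
        calc margU p u * (∑ y, |outCond M p u y - outCondInd M p u y|) ^ 2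
            ≤ margU p u * (2 * ∑ a, ∑ b, (p u a b / margU p u) *
                Real.log ((p u a b / margU p u) /
                  ((∑ b', p u a b') / margU p u * ((∑ a', p u a' b) / margU p u)))) :=
              mul_le_mul_of_nonneg_left (le_trans h3 h2) (hpU0 u)
          _ = 2 * (margU p u * (∑ a, ∑ b, (p u a b / margU p u) *
                Real.log ((p u a b / margU p u) /
                  ((∑ b', p u a b') / margU p u * ((∑ a', p u a' b) / margU p u))))) := by
              ring
    have step : ∑ u, margU p u * (∑ y, |outCond M p u y - outCondInd M p u y|) ^ 2
        ≤ 2 * δ * Real.log 2 := by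
      calc ∑ u, margU p u * (∑ y, |outCond M p u y - outCondInd M p u y|) ^ 2
          ≤ ∑ u, 2 * (margU p u * (∑ a, ∑ b, (p u a b / margU p u) *
              Real.log ((p u a b / margU p u) /
                ((∑ b', p u a b') / margU p u * ((∑ a', p u a' b) / margU p u))))) :=
            Finset.sum_le_sum fun u _ => bound u
        _ = 2 * (Real.log 2 * condMI p) := by rw [← Finset.mul_sum, mi_identity p hpn]
        _ ≤ 2 * δ * Real.log 2 := by nlinarith [hL0, hMI]
    have hsq : (∑ u, margU p u * ∑ y, |outCond M p u y - outCondInd M p u y|) ^ 2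
        ≤ Real.sqrt (2 * δ * Real.log 2) ^ 2 := by
      rw [hs2]; exact le_trans cs step
    nlinarith [hT0, hs0, hsq]
  -- per-u entropy difference bound
  have hqb : ∀ u : U,
      |(∑ y, outCond M p u y * Real.logb 2 (outCond M p u y)) -
        ∑ y, outCondInd M p u y * Real.logb 2 (outCondInd M p u y)| * Real.log 2 ≤
      (∑ y, |outCond M p u y - outCondInd M p u y|) *
        (Real.log (Fintype.card Y) - Real.log (Real.sqrt (2 * δ * Real.log 2)))
        + Real.sqrt (2 * δ * Real.log 2) := by
    intro u
    have conv : ∀ f : Y → ℝ,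
        (∑ y, f y * Real.logb 2 (f y)) * Real.log 2 = ∑ y, f y * Real.log (f y) := by
      intro f
      rw [Finset.sum_mul]
      refine Finset.sum_congr rfl fun y _ => ?_
      rw [Real.logb]
      field_simp
    have habs : |(∑ y, outCond M p u y * Real.logb 2 (outCond M p u y)) -
        ∑ y, outCondInd M p u y * Real.logb 2 (outCondInd M p u y)| * Real.log 2 =
        |(∑ y, outCond M p u y * Real.log (outCond M p u y)) -
          ∑ y, outCondInd M p u y * Real.log (outCondInd M p u y)| := by
      rw [← abs_of_nonneg (le_of_lt hL0), ← abs_mul, sub_mul, conv, conv]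
    rw [habs]
    exact ent_diff_bound (fun y => outCond M p u y) (fun y => outCondInd M p u y) _ hs0
      (outCond_nonneg M p hpn u) (outCond_le_one M p hpn u)
      (outCondInd_nonneg M p hpn u) (outCondInd_le_one M p hpn u)
  -- global bound
  have main : |condOutEnt p (outCond M p) - condOutEnt p (outCondInd M p)| * Real.log 2 ≤
      (∑ u, margU p u * ∑ y, |outCond M p u y - outCondInd M p u y|) *
        (Real.log (Fintype.card Y) - Real.log (Real.sqrt (2 * δ * Real.log 2)))
      + Real.sqrt (2 * δ * Real.log 2) := by
    have hd : condOutEnt p (outCond M p) - condOutEnt p (outCondInd M p)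
        = ∑ u, margU p u *
          ((∑ y, outCondInd M p u y * Real.logb 2 (outCondInd M p u y)) -
            ∑ y, outCond M p u y * Real.logb 2 (outCond M p u y)) := by
      rw [condOutEnt, condOutEnt]
      rw [show ∑ u, margU p u *
          ((∑ y, outCondInd M p u y * Real.logb 2 (outCondInd M p u y)) -
            ∑ y, outCond M p u y * Real.logb 2 (outCond M p u y))
          = ∑ u, (margU p u * (∑ y, outCondInd M p u y * Real.logb 2 (outCondInd M p u y)) -
              margU p u * (∑ y, outCond M p u y * Real.logb 2 (outCond M p u y)))
          from Finset.sum_congr rfl fun u _ => by ring]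
      rw [Finset.sum_sub_distrib]
      ring
    rw [hd]
    calc |∑ u, margU p u *
          ((∑ y, outCondInd M p u y * Real.logb 2 (outCondInd M p u y)) -
            ∑ y, outCond M p u y * Real.logb 2 (outCond M p u y))| * Real.log 2
        ≤ (∑ u, margU p u *
            |(∑ y, outCond M p u y * Real.logb 2 (outCond M p u y)) -
              ∑ y, outCondInd M p u y * Real.logb 2 (outCondInd M p u y)|) * Real.log 2 := by
          refine mul_le_mul_of_nonneg_right ?_ (le_of_lt hL0)
          refine le_trans (Finset.abs_sum_le_sum_abs _ _) (Finset.sum_le_sum fun u _ => ?_)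
          rw [abs_mul, abs_of_nonneg (hpU0 u), abs_sub_comm]
      _ = ∑ u, margU p u *
            (|(∑ y, outCond M p u y * Real.logb 2 (outCond M p u y)) -
              ∑ y, outCondInd M p u y * Real.logb 2 (outCondInd M p u y)| * Real.log 2) := by
          rw [Finset.sum_mul]
          exact Finset.sum_congr rfl fun u _ => by ring
      _ ≤ ∑ u, margU p u *
            ((∑ y, |outCond M p u y - outCondInd M p u y|) *
              (Real.log (Fintype.card Y) - Real.log (Real.sqrt (2 * δ * Real.log 2)))
              + Real.sqrt (2 * δ * Real.log 2)) :=
          Finset.sum_le_sum fun u _ => mul_le_mul_of_nonneg_left (hqb u) (hpU0 u)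
      _ = (∑ u, margU p u * ∑ y, |outCond M p u y - outCondInd M p u y|) *
            (Real.log (Fintype.card Y) - Real.log (Real.sqrt (2 * δ * Real.log 2)))
          + Real.sqrt (2 * δ * Real.log 2) := by
          rw [Finset.sum_mul,
            show ∑ u, margU p u *
              ((∑ y, |outCond M p u y - outCondInd M p u y|) *
                (Real.log (Fintype.card Y) - Real.log (Real.sqrt (2 * δ * Real.log 2)))
                + Real.sqrt (2 * δ * Real.log 2))
              = ∑ u, ((margU p u * ∑ y, |outCond M p u y - outCondInd M p u y|) *
                (Real.log (Fintype.card Y) - Real.log (Real.sqrt (2 * δ * Real.log 2)))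
                + margU p u * Real.sqrt (2 * δ * Real.log 2))
              from Finset.sum_congr rfl fun u _ => by ring]
          rw [Finset.sum_add_distrib, ← Finset.sum_mul, ← Finset.sum_mul, hpUsum, one_mul]
  -- final arithmetic
  have hgoal : Real.sqrt (2 * δ * Real.log 2) *
      Real.logb 2 ((Fintype.card Y : ℝ) ^ 3 / Real.sqrt (2 * δ * Real.log 2)) * Real.log 2
      = Real.sqrt (2 * δ * Real.log 2) *
        (3 * Real.log (Fintype.card Y) - Real.log (Real.sqrt (2 * δ * Real.log 2))) := by
    rw [Real.logb, Real.log_div (by positivity) (ne_of_gt hs0), Real.log_pow]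
    field_simp
    push_cast
    ring
  rw [← mul_le_mul_iff_of_pos_right hL0, hgoal]
  have hlogsm : Real.log (Real.sqrt (2 * δ * Real.log 2)) ≤ Real.log (Fintype.card Y) :=
    Real.log_le_log hs0 hsm
  rcases le_or_gt 2 (Fintype.card Y) with hm2 | hm2
  · -- |Y| ≥ 2
    have hlog2m : Real.log 2 ≤ Real.log (Fintype.card Y) :=
      Real.log_le_log (by norm_num) (by exact_mod_cast hm2)
    have h12 : (1:ℝ) ≤ 2 * Real.log (Fintype.card Y) := by
      nlinarith [Real.log_two_gt_d9]
    refine le_trans main ?_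
    nlinarith [hTs, hT0, hs0, hlogsm, h12]
  · -- |Y| = 1
    have hc1 : Fintype.card Y = 1 := by
      have h1 : 1 ≤ Fintype.card Y := by
        have := hm0
        exact_mod_cast Nat.one_le_iff_ne_zero.mpr (by
          intro h
          rw [h] at this
          norm_num at this)
      omega
    obtain ⟨y0, hy0⟩ := Fintype.card_eq_one_iff.mp hc1
    have huniv : (Finset.univ : Finset Y) = {y0} := by
      ext z
      simp [hy0 z]
    have htz : ∀ u : U, ∑ y, |outCond M p u y - outCondInd M p u y| = 0 := by
      intro u
      rw [huniv, Finset.sum_singleton]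
      by_cases hu : margU p u = 0
      · rw [outCond_zero M p hpn u hu y0, outCondInd_zero M p hpn u hu y0]
        simp
      · have h1 := outCond_sum M p u hu
        have h2 := outCondInd_sum M p u hu
        rw [huniv, Finset.sum_singleton] at h1 h2
        rw [h1, h2]
        simp
    have hTz : (∑ u, margU p u * ∑ y, |outCond M p u y - outCondInd M p u y|) = 0 :=
      Finset.sum_eq_zero fun u _ => by rw [htz u, mul_zero]
    have hse : Real.sqrt (2 * δ * Real.log 2) ≤ Real.exp (-1) := by
      rw [Real.exp_neg]
      calc Real.sqrt (2 * δ * Real.log 2) ≤ (Fintype.card Y : ℝ) / Real.exp 1 := hsmall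
        _ = (Real.exp 1)⁻¹ := by rw [hc1]; norm_num
    have hlogs : Real.log (Real.sqrt (2 * δ * Real.log 2)) ≤ -1 := by
      calc Real.log (Real.sqrt (2 * δ * Real.log 2)) ≤ Real.log (Real.exp (-1)) :=
            Real.log_le_log hs0 hse
        _ = -1 := Real.log_exp _
    have hlogc : Real.log (Fintype.card Y : ℝ) = 0 := by rw [hc1]; norm_num
    refine le_trans main ?_
    rw [hTz, hlogc, zero_mul]
    nlinarith [hs0, hlogs]
end
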